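/- arXiv:2510.27550 — 4 statements merged into one kernel-verified Lean document; each statement's English description precedes it below -/
import Mathlib

section
/- Let X be a locally compact Hausdorff topological space and let μ and ν be two complex Radon measures on X (complex Borel measures of finite total variation whose total variation measures are outer regular). If μ and ν are mutually alien (mutually singular), i.e. there is a Borel set M ⊆ X with |μ|(X \ M) = 0 and |ν|(M) = 0, then μ and ν are orthogonal: for every ε > 0 there exist open sets U, V ⊆ X with U ∪ V = X such that every continuous compactly supported function φ : X → ℂ with supp φ ⊆ U satisfies |∫ φ dμ| ≤ ε‖φ‖_∞, and every continuous compactly supported φ with supp φ ⊆ V satisfies |∫ φ dν| ≤ ε‖φ‖_∞. -/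
open MeasureTheory Filter Topology

/-- Integration of a (bounded continuous) function against a complex measure,
via the Jordan decompositions of its real and imaginary parts. -/
noncomputable def cmIntegral {X : Type*} [MeasurableSpace X]
    (μ : MeasureTheory.ComplexMeasure X) (φ : X → ℂ) : ℂ :=
  ((∫ x, φ x ∂(MeasureTheory.ComplexMeasure.re μ).toJordanDecomposition.posPart) -
      ∫ x, φ x ∂(MeasureTheory.ComplexMeasure.re μ).toJordanDecomposition.negPart) +
    Complex.I *
      ((∫ x, φ x ∂(MeasureTheory.ComplexMeasure.im μ).toJordanDecomposition.posPart) -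
        ∫ x, φ x ∂(MeasureTheory.ComplexMeasure.im μ).toJordanDecomposition.negPart)

/-- The total variation measure of a complex measure (up to a bounded factor:
the sum of the total variations of real and imaginary parts; it has the same
null sets as the usual total variation). -/
noncomputable def cmVariation {X : Type*} [MeasurableSpace X]
    (μ : MeasureTheory.ComplexMeasure X) : MeasureTheory.Measure X :=
  (MeasureTheory.ComplexMeasure.re μ).totalVariation +
    (MeasureTheory.ComplexMeasure.im μ).totalVariation

lemma piece_bound {X : Type*} [TopologicalSpace X] [MeasurableSpace X] [BorelSpace X]
    (m : Measure X) [IsFiniteMeasure m] (φ : X → ℂ) (hc : Continuous φ)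
    (U : Set X) (hUm : MeasurableSet U) (hsupp : tsupport φ ⊆ U)
    (C : ℝ) (hC : ∀ x, ‖φ x‖ ≤ C) :
    ‖∫ x, φ x ∂m‖ ≤ C * (m U).toReal := by
  have h0 : ∀ x ∉ U, φ x = 0 := fun x hx =>
    image_eq_zero_of_notMem_tsupport (fun h => hx (hsupp h))
  rw [← MeasureTheory.setIntegral_eq_integral_of_forall_compl_eq_zero h0]
  exact norm_setIntegral_le_of_norm_le_const_ae' (measure_lt_top m U)
    (Eventually.of_forall fun x _ => hC x)

lemma cmIntegral_bound {X : Type*} [TopologicalSpace X] [MeasurableSpace X] [BorelSpace X]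
    (μ : MeasureTheory.ComplexMeasure X) (φ : X → ℂ) (hc : Continuous φ)
    (U : Set X) (hUm : MeasurableSet U) (hsupp : tsupport φ ⊆ U)
    (C : ℝ) (hC : ∀ x, ‖φ x‖ ≤ C) :
    ‖cmIntegral μ φ‖ ≤ C * (cmVariation μ U).toReal := by
  set P := (MeasureTheory.ComplexMeasure.re μ).toJordanDecomposition.posPart
  set N := (MeasureTheory.ComplexMeasure.re μ).toJordanDecomposition.negPart
  set P' := (MeasureTheory.ComplexMeasure.im μ).toJordanDecomposition.posPart
  set N' := (MeasureTheory.ComplexMeasure.im μ).toJordanDecomposition.negPart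
  have hvar : cmVariation μ U = P U + N U + (P' U + N' U) := by
    simp [cmVariation, SignedMeasure.totalVariation, Measure.add_apply, P, N, P', N']
  have h1 := piece_bound P φ hc U hUm hsupp C hC
  have h2 := piece_bound N φ hc U hUm hsupp C hC
  have h3 := piece_bound P' φ hc U hUm hsupp C hC
  have h4 := piece_bound N' φ hc U hUm hsupp C hC
  have hnorm : ‖cmIntegral μ φ‖ ≤ ‖∫ x, φ x ∂P‖ + ‖∫ x, φ x ∂N‖ +
      (‖∫ x, φ x ∂P'‖ + ‖∫ x, φ x ∂N'‖) := by
    unfold cmIntegral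
    calc _ ≤ ‖(∫ x, φ x ∂P) - ∫ x, φ x ∂N‖ +
          ‖Complex.I * ((∫ x, φ x ∂P') - ∫ x, φ x ∂N')‖ := norm_add_le _ _
      _ ≤ _ := by
          rw [norm_mul, Complex.norm_I, one_mul]
          gcongr <;> exact norm_sub_le _ _
  have htoReal : (cmVariation μ U).toReal =
      (P U).toReal + (N U).toReal + ((P' U).toReal + (N' U).toReal) := by
    rw [hvar]
    rw [ENNReal.toReal_add, ENNReal.toReal_add, ENNReal.toReal_add] <;>
      first
        | exact (measure_lt_top _ _).ne
        | exact (ENNReal.add_lt_top.2 ⟨measure_lt_top _ _, measure_lt_top _ _⟩).ne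
  rw [htoReal]
  calc ‖cmIntegral μ φ‖ ≤ _ := hnorm
    _ ≤ C * (P U).toReal + C * (N U).toReal + (C * (P' U).toReal + C * (N' U).toReal) := by
        gcongr
    _ = _ := by ring

/-- mutually alien (singular) complex Radon measures are orthogonal. -/
theorem alien_imp_orthogonal {X : Type*} [TopologicalSpace X] [LocallyCompactSpace X]
    [T2Space X] [MeasurableSpace X] [BorelSpace X]
    (μ ν : MeasureTheory.ComplexMeasure X)
    (hμreg : (cmVariation μ).OuterRegular) (hνreg : (cmVariation ν).OuterRegular)
    (halien : ∃ M : Set X, MeasurableSet M ∧ cmVariation μ Mᶜ = 0 ∧ cmVariation ν M = 0) :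
    ∀ ε : ℝ, 0 < ε → ∃ U V : Set X, IsOpen U ∧ IsOpen V ∧ U ∪ V = Set.univ ∧
      (∀ φ : X → ℂ, Continuous φ → HasCompactSupport φ → tsupport φ ⊆ U →
        ‖cmIntegral μ φ‖ ≤ ε * ⨆ x, ‖φ x‖) ∧
      (∀ φ : X → ℂ, Continuous φ → HasCompactSupport φ → tsupport φ ⊆ V →
        ‖cmIntegral ν φ‖ ≤ ε * ⨆ x, ‖φ x‖) := by
  intro ε hε
  obtain ⟨M, hMm, hμM, hνM⟩ := halien
  have hεE : (0 : ENNReal) < ENNReal.ofReal ε := ENNReal.ofReal_pos.2 hε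
  haveI := hμreg; haveI := hνreg
  obtain ⟨U, hMU, hUo, hUlt⟩ := Set.exists_isOpen_lt_of_lt (μ := cmVariation μ) Mᶜ
    (ENNReal.ofReal ε) (by rw [hμM]; exact hεE)
  obtain ⟨V, hMV, hVo, hVlt⟩ := Set.exists_isOpen_lt_of_lt (μ := cmVariation ν) M
    (ENNReal.ofReal ε) (by rw [hνM]; exact hεE)
  refine ⟨U, V, hUo, hVo, ?_, ?_, ?_⟩
  · rw [Set.eq_univ_iff_forall]
    intro x
    by_cases hx : x ∈ M
    · exact Or.inr (hMV hx)
    · exact Or.inl (hMU hx)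
  · intro φ hc hcs hsupp
    have hC : ∀ x, ‖φ x‖ ≤ ⨆ x, ‖φ x‖ := fun x =>
      le_ciSup (hc.norm.bddAbove_range_of_hasCompactSupport hcs.norm) x
    have hC0 : 0 ≤ ⨆ x, ‖φ x‖ := by
      rcases isEmpty_or_nonempty X with h | h
      · simp [Real.iSup_of_isEmpty]
      · exact le_trans (norm_nonneg _) (hC (Classical.arbitrary X))
    calc ‖cmIntegral μ φ‖ ≤ (⨆ x, ‖φ x‖) * (cmVariation μ U).toReal :=
          cmIntegral_bound μ φ hc U hUo.measurableSet hsupp _ hC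
      _ ≤ (⨆ x, ‖φ x‖) * ε := by
          gcongr
          exact ENNReal.toReal_le_of_le_ofReal hε.le hUlt.le
      _ = ε * ⨆ x, ‖φ x‖ := mul_comm _ _
  · intro φ hc hcs hsupp
    have hC : ∀ x, ‖φ x‖ ≤ ⨆ x, ‖φ x‖ := fun x =>
      le_ciSup (hc.norm.bddAbove_range_of_hasCompactSupport hcs.norm) x
    have hC0 : 0 ≤ ⨆ x, ‖φ x‖ := by
      rcases isEmpty_or_nonempty X with h | h
      · simp [Real.iSup_of_isEmpty]
      · exact le_trans (norm_nonneg _) (hC (Classical.arbitrary X))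
    calc ‖cmIntegral ν φ‖ ≤ (⨆ x, ‖φ x‖) * (cmVariation ν V).toReal :=
          cmIntegral_bound ν φ hc V hVo.measurableSet hsupp _ hC
      _ ≤ (⨆ x, ‖φ x‖) * ε := by
          gcongr
          exact ENNReal.toReal_le_of_le_ofReal hε.le hVlt.le
      _ = ε * ⨆ x, ‖φ x‖ := mul_comm _ _
end

section
/- Let X be a locally compact Hausdorff topological space and let μ and ν be two complex Radon measures on X (complex Borel measures of finite total variation, with |μ| and |ν| inner regular with respect to compact sets and outer regular). If μ and ν are orthogonal — i.e. for every ε > 0 there exist open sets U, V ⊆ X with U ∪ V = X such that |∫ φ dμ| ≤ ε‖φ‖_∞ for every φ ∈ C_c(X) with supp φ ⊆ U and |∫ φ dν| ≤ ε‖φ‖_∞ for every φ ∈ C_c(X) with supp φ ⊆ V — then μ and ν are mutually alien: there exist disjoint Borel sets R, S ⊆ X with |μ|(X \ R) = 0 and |ν|(X \ S) = 0. -/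
open MeasureTheory Filter Topology
open scoped ENNReal NNReal

section Aux

variable {X : Type*} [MeasurableSpace X]

instance cmVariation.instIsFiniteMeasure (μ : ComplexMeasure X) :
    IsFiniteMeasure (cmVariation μ) := by
  unfold cmVariation SignedMeasure.totalVariation
  infer_instance

lemma sm_apply_eq (s : SignedMeasure X) {k : Set X} (hk : MeasurableSet k) :
    s k = (s.toJordanDecomposition.posPart k).toReal
        - (s.toJordanDecomposition.negPart k).toReal := by
  conv_lhs => rw [← s.toSignedMeasure_toJordanDecomposition]
  rw [JordanDecomposition.toSignedMeasure, Measure.toSignedMeasure_sub_apply hk]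
  rfl

lemma cmVariation_apply (μ : ComplexMeasure X) (s : Set X) :
    cmVariation μ s =
      (ComplexMeasure.re μ).toJordanDecomposition.posPart s
      + (ComplexMeasure.re μ).toJordanDecomposition.negPart s
      + ((ComplexMeasure.im μ).toJordanDecomposition.posPart s
      + (ComplexMeasure.im μ).toJordanDecomposition.negPart s) := by
  simp [cmVariation, SignedMeasure.totalVariation]

lemma integral_between (ρ : Measure X) [IsFiniteMeasure ρ] {g : X → ℝ}
    (hg : Integrable g ρ) {K O : Set X} (hK : MeasurableSet K) (hO : MeasurableSet O)
    (hKO : K ⊆ O) (hg0 : ∀ x, 0 ≤ g x) (hg1 : ∀ x, g x ≤ 1)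
    (hgK : ∀ x ∈ K, g x = 1) (hgO : ∀ x ∉ O, g x = 0) :
    |∫ x, g x ∂ρ - (ρ K).toReal| ≤ (ρ (O \ K)).toReal := by
  have hlow : (ρ K).toReal ≤ ∫ x, g x ∂ρ := by
    show ρ.real K ≤ ∫ x, g x ∂ρ
    rw [← integral_indicator_one hK]
    refine integral_mono ((integrable_const (1:ℝ)).indicator hK) hg fun x => ?_
    by_cases hx : x ∈ K
    · simp [Set.indicator_of_mem hx, hgK x hx]
    · simp [Set.indicator_of_notMem hx, hg0 x]
  have hup : ∫ x, g x ∂ρ ≤ (ρ O).toReal := by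
    show ∫ x, g x ∂ρ ≤ ρ.real O
    rw [← integral_indicator_one hO]
    refine integral_mono hg ((integrable_const (1:ℝ)).indicator hO) fun x => ?_
    by_cases hx : x ∈ O
    · simp [Set.indicator_of_mem hx, hg1 x]
    · simp [Set.indicator_of_notMem hx, hgO x hx]
  have hsplit : (ρ O).toReal = (ρ K).toReal + (ρ (O \ K)).toReal := by
    rw [← ENNReal.toReal_add (measure_ne_top _ _) (measure_ne_top _ _)]
    congr 1
    rw [← measure_inter_add_diff O hK, Set.inter_eq_self_of_subset_right hKO]
  rw [abs_le]
  constructor <;> [skip; skip] <;>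
    · have := ENNReal.toReal_nonneg (a := ρ (O \ K))
      linarith

lemma cmIntegral_near (μ : ComplexMeasure X) [TopologicalSpace X] [OpensMeasurableSpace X]
    {g : X → ℝ} (hgc : Continuous g) (hgcs : HasCompactSupport g)
    {K O : Set X} (hK : MeasurableSet K) (hO : MeasurableSet O)
    (hKO : K ⊆ O) (hg0 : ∀ x, 0 ≤ g x) (hg1 : ∀ x, g x ≤ 1)
    (hgK : ∀ x ∈ K, g x = 1) (hgO : ∀ x ∉ O, g x = 0) :
    ‖cmIntegral μ (fun x => (g x : ℂ)) - μ K‖ ≤ (cmVariation μ (O \ K)).toReal := by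
  set pr := (ComplexMeasure.re μ).toJordanDecomposition.posPart with hpr
  set nr := (ComplexMeasure.re μ).toJordanDecomposition.negPart with hnr
  set pi := (ComplexMeasure.im μ).toJordanDecomposition.posPart with hpi
  set ni := (ComplexMeasure.im μ).toJordanDecomposition.negPart with hni
  have h1 := integral_between pr (hgc.integrable_of_hasCompactSupport hgcs) hK hO hKO hg0 hg1 hgK hgO
  have h2 := integral_between nr (hgc.integrable_of_hasCompactSupport hgcs) hK hO hKO hg0 hg1 hgK hgO
  have h3 := integral_between pi (hgc.integrable_of_hasCompactSupport hgcs) hK hO hKO hg0 hg1 hgK hgO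
  have h4 := integral_between ni (hgc.integrable_of_hasCompactSupport hgcs) hK hO hKO hg0 hg1 hgK hgO
  have hint : cmIntegral μ (fun x => (g x : ℂ)) =
      (((∫ x, g x ∂pr) - ∫ x, g x ∂nr : ℝ) : ℂ)
        + Complex.I * (((∫ x, g x ∂pi) - ∫ x, g x ∂ni : ℝ) : ℂ) := by
    have hior : ∀ ρ : Measure X, ∫ x, ((g x : ℂ)) ∂ρ = ((∫ x, g x ∂ρ : ℝ) : ℂ) :=
      fun ρ => integral_ofReal
    unfold cmIntegral
    beta_reduce
    rw [hior, hior, hior, hior]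
    push_cast
    ring
  have hμK : μ K = (((μ K).re : ℝ) : ℂ) + Complex.I * (((μ K).im : ℝ) : ℂ) := by
    nth_rewrite 1 [← Complex.re_add_im (μ K)]
    ring
  have hre : (μ K).re = (pr K).toReal - (nr K).toReal := sm_apply_eq (ComplexMeasure.re μ) hK
  have him : (μ K).im = (pi K).toReal - (ni K).toReal := sm_apply_eq (ComplexMeasure.im μ) hK
  rw [hint, hμK, hre, him]
  have hrw : ((((∫ x, g x ∂pr) - ∫ x, g x ∂nr : ℝ)) : ℂ)
        + Complex.I * (((∫ x, g x ∂pi) - ∫ x, g x ∂ni : ℝ) : ℂ)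
        - ((((pr K).toReal - (nr K).toReal : ℝ) : ℂ)
          + Complex.I * (((pi K).toReal - (ni K).toReal : ℝ) : ℂ))
      = ((((∫ x, g x ∂pr) - ∫ x, g x ∂nr) - ((pr K).toReal - (nr K).toReal) : ℝ) : ℂ)
        + Complex.I * ((((∫ x, g x ∂pi) - ∫ x, g x ∂ni) - ((pi K).toReal - (ni K).toReal) : ℝ) : ℂ) := by
    push_cast
    ring
  rw [hrw]
  have e1 : |((∫ x, g x ∂pr) - ∫ x, g x ∂nr) - ((pr K).toReal - (nr K).toReal)|
      ≤ (pr (O \ K)).toReal + (nr (O \ K)).toReal := by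
    have heq : ((∫ x, g x ∂pr) - ∫ x, g x ∂nr) - ((pr K).toReal - (nr K).toReal)
        = ((∫ x, g x ∂pr) - (pr K).toReal) - ((∫ x, g x ∂nr) - (nr K).toReal) := by ring
    rw [heq]
    exact (abs_sub _ _).trans (add_le_add h1 h2)
  have e2 : |((∫ x, g x ∂pi) - ∫ x, g x ∂ni) - ((pi K).toReal - (ni K).toReal)|
      ≤ (pi (O \ K)).toReal + (ni (O \ K)).toReal := by
    have heq : ((∫ x, g x ∂pi) - ∫ x, g x ∂ni) - ((pi K).toReal - (ni K).toReal)
        = ((∫ x, g x ∂pi) - (pi K).toReal) - ((∫ x, g x ∂ni) - (ni K).toReal) := by ring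
    rw [heq]
    exact (abs_sub _ _).trans (add_le_add h3 h4)
  have hfin : (cmVariation μ (O \ K)).toReal
      = (pr (O \ K)).toReal + (nr (O \ K)).toReal
        + ((pi (O \ K)).toReal + (ni (O \ K)).toReal) := by
    rw [cmVariation_apply μ (O \ K), ← hpr, ← hnr, ← hpi, ← hni,
      ENNReal.toReal_add (by exact ENNReal.add_ne_top.2 ⟨measure_ne_top _ _, measure_ne_top _ _⟩)
        (by exact ENNReal.add_ne_top.2 ⟨measure_ne_top _ _, measure_ne_top _ _⟩),
      ENNReal.toReal_add (measure_ne_top _ _) (measure_ne_top _ _),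
      ENNReal.toReal_add (measure_ne_top _ _) (measure_ne_top _ _)]
  calc ‖_ + Complex.I * _‖ ≤ ‖_‖ + ‖Complex.I * _‖ := norm_add_le _ _
    _ = |((∫ x, g x ∂pr) - ∫ x, g x ∂nr) - ((pr K).toReal - (nr K).toReal)|
        + |((∫ x, g x ∂pi) - ∫ x, g x ∂ni) - ((pi K).toReal - (ni K).toReal)| := by
      rw [norm_mul, Complex.norm_I, one_mul, Complex.norm_real, Complex.norm_real,
        Real.norm_eq_abs, Real.norm_eq_abs]
    _ ≤ _ := by rw [hfin]; exact add_le_add e1 e2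

end Aux

section Key

variable {X : Type*} [MeasurableSpace X] [TopologicalSpace X] [LocallyCompactSpace X]
  [T2Space X] [BorelSpace X] [Nonempty X]

lemma key_estimate (μ : ComplexMeasure X) (hout : (cmVariation μ).OuterRegular)
    (hin : (cmVariation μ).InnerRegular)
    {U : Set X} (hUo : IsOpen U) {ε : ℝ} (hε : 0 < ε)
    (hU : ∀ φ : X → ℂ, Continuous φ → HasCompactSupport φ → tsupport φ ⊆ U →
      ‖cmIntegral μ φ‖ ≤ ε * ⨆ x, ‖φ x‖)
    (τ : Measure X) (hτle : τ ≤ cmVariation μ)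
    {C : Set X} (hCm : MeasurableSet C) (hC0 : τ Cᶜ = 0)
    (hval : ∀ K : Set X, IsCompact K → K ⊆ C → (τ K).toReal ≤ ‖μ K‖)
    {K : Set X} (hKc : IsCompact K) (hKU : K ⊆ U) :
    τ K ≤ ENNReal.ofReal ε := by
  haveI := hout
  haveI := hin
  have hτfin : ∀ s, τ s ≠ ∞ := fun s =>
    ne_top_of_le_ne_top (measure_ne_top (cmVariation μ) s) (Measure.le_iff'.mp hτle s)
  have main : ∀ δ : ℝ, 0 < δ → (τ K).toReal ≤ ε + 2 * δ := by
    intro δ hδ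
    have hδ' : (ENNReal.ofReal δ) ≠ 0 := (ENNReal.ofReal_pos.2 hδ).ne'
    set m := cmVariation μ with hm
    have hKCm : MeasurableSet (K ∩ C) := (hKc.isClosed.measurableSet).inter hCm
    obtain ⟨K₁, hK₁sub, hK₁c, hlt⟩ :=
      hKCm.exists_isCompact_lt_add (measure_ne_top m _) (ε := ENNReal.ofReal δ) hδ'
    have hdiff : m ((K ∩ C) \ K₁) ≤ ENNReal.ofReal δ :=
      (measure_diff_lt_of_lt_add (hK₁c.isClosed.measurableSet.nullMeasurableSet)
        hK₁sub (measure_ne_top m _) hlt).le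
    -- step 2
    have hτK₁fin := hτfin K₁
    have h2 : (τ K).toReal ≤ (τ K₁).toReal + δ := by
      have hchain : τ K ≤ τ K₁ + ENNReal.ofReal δ := by
        calc τ K ≤ τ (K ∩ C) + τ (K \ C) := measure_le_inter_add_diff τ K C
          _ = τ (K ∩ C) := by
              have hz : τ (K \ C) = 0 := measure_mono_null (fun x hx => hx.2) hC0
              rw [hz, add_zero]
          _ ≤ τ ((K ∩ C) ∩ K₁) + τ ((K ∩ C) \ K₁) := measure_le_inter_add_diff τ (K ∩ C) K₁
          _ ≤ τ K₁ + ENNReal.ofReal δ :=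
              add_le_add (measure_mono Set.inter_subset_right)
                ((Measure.le_iff'.mp hτle _).trans hdiff)
      calc (τ K).toReal ≤ (τ K₁ + ENNReal.ofReal δ).toReal := by
            apply ENNReal.toReal_mono _ hchain
            exact ENNReal.add_ne_top.2 ⟨hτK₁fin, ENNReal.ofReal_ne_top⟩
        _ = (τ K₁).toReal + δ := by
            rw [ENNReal.toReal_add hτK₁fin ENNReal.ofReal_ne_top,
              ENNReal.toReal_ofReal hδ.le]
    have h3 : (τ K₁).toReal ≤ ‖μ K₁‖ :=
      hval K₁ hK₁c (hK₁sub.trans Set.inter_subset_right)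
    -- step 4: open set O
    have hK₁U : K₁ ⊆ U := (hK₁sub.trans Set.inter_subset_left).trans hKU
    obtain ⟨L, hLc, hK₁L, hLU⟩ := exists_compact_between hK₁c hUo hK₁U
    obtain ⟨O', hO'sup, hO'o, hO'lt⟩ :=
      Set.exists_isOpen_lt_add (μ := m) K₁ (measure_ne_top m K₁) hδ'
    set O := O' ∩ interior L with hO
    have hOo : IsOpen O := hO'o.inter isOpen_interior
    have hK₁O : K₁ ⊆ O := Set.subset_inter hO'sup hK₁L
    have hOdiff : m (O \ K₁) ≤ ENNReal.ofReal δ := by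
      have h1 : m (O \ K₁) ≤ m (O' \ K₁) :=
        measure_mono (Set.diff_subset_diff_left Set.inter_subset_left)
      exact h1.trans (measure_diff_lt_of_lt_add
        (hK₁c.isClosed.measurableSet.nullMeasurableSet) hO'sup
        (measure_ne_top m K₁) hO'lt).le
    -- Urysohn
    obtain ⟨f, hfK, hfO, hfcs, hf01⟩ :=
      exists_continuous_one_zero_of_isCompact hK₁c (hOo.isClosed_compl)
        (Set.disjoint_left.mpr fun x hx hxc => hxc (hK₁O hx))
    set φ : X → ℂ := fun x => ((f x : ℝ) : ℂ) with hφ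
    have hφc : Continuous φ := Complex.continuous_ofReal.comp f.continuous
    have hφcs : HasCompactSupport φ := hfcs.comp_left (g := fun r : ℝ => (r : ℂ)) Complex.ofReal_zero
    have htsf : tsupport f ⊆ L := by
      apply closure_minimal _ hLc.isClosed
      intro x hx
      by_contra hxL
      exact hx (hfO fun hxO => hxL (interior_subset hxO.2))
    have htsφ : tsupport φ ⊆ U := by
      refine le_trans (closure_mono ?_) (htsf.trans hLU)
      intro x hx hfx
      exact hx (by simp [hφ, hfx])
    have hsup : (⨆ x, ‖φ x‖) ≤ 1 := by
      refine ciSup_le fun x => ?_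
      rw [hφ]
      simp only [Complex.norm_real, Real.norm_eq_abs]
      exact abs_le.mpr ⟨by linarith [(hf01 x).1], (hf01 x).2⟩
    have hbig := hU φ hφc hφcs htsφ
    have hnear := cmIntegral_near μ f.continuous hfcs
      hK₁c.isClosed.measurableSet hOo.measurableSet hK₁O
      (fun x => (hf01 x).1) (fun x => (hf01 x).2)
      (fun x hx => hfK hx) (fun x hx => hfO hx)
    have hnear' : ‖cmIntegral μ φ - μ K₁‖ ≤ δ := by
      refine hnear.trans ?_
      rw [← ENNReal.toReal_ofReal hδ.le]
      exact ENNReal.toReal_mono ENNReal.ofReal_ne_top hOdiff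
    have h5 : ‖μ K₁‖ ≤ ε + δ := by
      have h6 : ‖μ K₁‖ ≤ ‖cmIntegral μ φ‖ + ‖cmIntegral μ φ - μ K₁‖ := by
        conv_lhs => rw [← sub_sub_cancel (cmIntegral μ φ) (μ K₁)]
        exact norm_sub_le _ _
      have h7 : ε * (⨆ x, ‖φ x‖) ≤ ε := by
        calc ε * (⨆ x, ‖φ x‖) ≤ ε * 1 := by
              apply mul_le_mul_of_nonneg_left hsup hε.le
          _ = ε := mul_one ε
      linarith
    linarith
  have hfinal : (τ K).toReal ≤ ε := by
    by_contra h
    push_neg at h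
    have := main (((τ K).toReal - ε) / 4) (by linarith)
    linarith
  calc τ K = ENNReal.ofReal (τ K).toReal := (ENNReal.ofReal_toReal (hτfin K)).symm
    _ ≤ ENNReal.ofReal ε := ENNReal.ofReal_le_ofReal hfinal

lemma var_open_le (μ : ComplexMeasure X) (hout : (cmVariation μ).OuterRegular)
    (hin : (cmVariation μ).InnerRegular)
    {U : Set X} (hUo : IsOpen U) {ε : ℝ} (hε : 0 < ε)
    (hU : ∀ φ : X → ℂ, Continuous φ → HasCompactSupport φ → tsupport φ ⊆ U →
      ‖cmIntegral μ φ‖ ≤ ε * ⨆ x, ‖φ x‖) :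
    cmVariation μ U ≤ ENNReal.ofReal (4 * ε) := by
  haveI := hout; haveI := hin
  set pr := (ComplexMeasure.re μ).toJordanDecomposition.posPart with hpr
  set nr := (ComplexMeasure.re μ).toJordanDecomposition.negPart with hnr
  set pi := (ComplexMeasure.im μ).toJordanDecomposition.posPart with hpi
  set ni := (ComplexMeasure.im μ).toJordanDecomposition.negPart with hni
  have hprle : pr ≤ cmVariation μ := Measure.le_iff'.mpr fun s => by
    rw [cmVariation_apply μ s, ← hpr, ← hnr, ← hpi, ← hni]
    exact le_self_add.trans le_self_add
  have hnrle : nr ≤ cmVariation μ := Measure.le_iff'.mpr fun s => by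
    rw [cmVariation_apply μ s, ← hpr, ← hnr, ← hpi, ← hni]
    exact le_add_self.trans le_self_add
  have hpile : pi ≤ cmVariation μ := Measure.le_iff'.mpr fun s => by
    rw [cmVariation_apply μ s, ← hpr, ← hnr, ← hpi, ← hni]
    exact le_self_add.trans le_add_self
  have hnile : ni ≤ cmVariation μ := Measure.le_iff'.mpr fun s => by
    rw [cmVariation_apply μ s, ← hpr, ← hnr, ← hpi, ← hni]
    exact le_add_self.trans le_add_self
  obtain ⟨tr, htrm, htr1, htr2⟩ := (ComplexMeasure.re μ).toJordanDecomposition.mutuallySingular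
  obtain ⟨ti, htim, hti1, hti2⟩ := (ComplexMeasure.im μ).toJordanDecomposition.mutuallySingular
  have hcpt : ∀ K : Set X, IsCompact K → K ⊆ U →
      cmVariation μ K ≤ ENNReal.ofReal (4 * ε) := by
    intro K hKc hKU
    have hvr : ∀ K₁ : Set X, IsCompact K₁ → K₁ ⊆ trᶜ → (pr K₁).toReal ≤ ‖μ K₁‖ := by
      intro K₁ hK₁c hK₁sub
      have hnr0 : nr K₁ = 0 := measure_mono_null (fun x hx => by
        have := hK₁sub hx
        simpa using this) htr2
      have hre : (μ K₁).re = (pr K₁).toReal - (nr K₁).toReal :=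
        sm_apply_eq (ComplexMeasure.re μ) hK₁c.isClosed.measurableSet
      have : (pr K₁).toReal = (μ K₁).re := by rw [hre, hnr0]; simp
      rw [this]
      exact (le_abs_self _).trans (Complex.abs_re_le_norm _)
    have hvr' : ∀ K₁ : Set X, IsCompact K₁ → K₁ ⊆ tr → (nr K₁).toReal ≤ ‖μ K₁‖ := by
      intro K₁ hK₁c hK₁sub
      have hpr0 : pr K₁ = 0 := measure_mono_null hK₁sub htr1
      have hre : (μ K₁).re = (pr K₁).toReal - (nr K₁).toReal :=
        sm_apply_eq (ComplexMeasure.re μ) hK₁c.isClosed.measurableSet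
      have : (nr K₁).toReal = -(μ K₁).re := by rw [hre, hpr0]; simp
      rw [this]
      exact (neg_le_abs _).trans (Complex.abs_re_le_norm _)
    have hvi : ∀ K₁ : Set X, IsCompact K₁ → K₁ ⊆ tiᶜ → (pi K₁).toReal ≤ ‖μ K₁‖ := by
      intro K₁ hK₁c hK₁sub
      have hni0 : ni K₁ = 0 := measure_mono_null (fun x hx => by
        have := hK₁sub hx
        simpa using this) hti2
      have him : (μ K₁).im = (pi K₁).toReal - (ni K₁).toReal :=
        sm_apply_eq (ComplexMeasure.im μ) hK₁c.isClosed.measurableSet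
      have : (pi K₁).toReal = (μ K₁).im := by rw [him, hni0]; simp
      rw [this]
      exact (le_abs_self _).trans (Complex.abs_im_le_norm _)
    have hvi' : ∀ K₁ : Set X, IsCompact K₁ → K₁ ⊆ ti → (ni K₁).toReal ≤ ‖μ K₁‖ := by
      intro K₁ hK₁c hK₁sub
      have hpi0 : pi K₁ = 0 := measure_mono_null hK₁sub hti1
      have him : (μ K₁).im = (pi K₁).toReal - (ni K₁).toReal :=
        sm_apply_eq (ComplexMeasure.im μ) hK₁c.isClosed.measurableSet
      have : (ni K₁).toReal = -(μ K₁).im := by rw [him, hpi0]; simp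
      rw [this]
      exact (neg_le_abs _).trans (Complex.abs_im_le_norm _)
    have k1 := key_estimate μ hout hin hUo hε hU pr hprle htrm.compl
      (by rw [compl_compl]; exact htr1) hvr hKc hKU
    have k2 := key_estimate μ hout hin hUo hε hU nr hnrle htrm htr2 hvr' hKc hKU
    have k3 := key_estimate μ hout hin hUo hε hU pi hpile htim.compl
      (by rw [compl_compl]; exact hti1) hvi hKc hKU
    have k4 := key_estimate μ hout hin hUo hε hU ni hnile htim hti2 hvi' hKc hKU
    calc cmVariation μ K = pr K + nr K + (pi K + ni K) := by
          rw [cmVariation_apply μ K, ← hpr, ← hnr, ← hpi, ← hni]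
      _ ≤ ENNReal.ofReal ε + ENNReal.ofReal ε + (ENNReal.ofReal ε + ENNReal.ofReal ε) :=
          add_le_add (add_le_add k1 k2) (add_le_add k3 k4)
      _ = ENNReal.ofReal (4 * ε) := by
          rw [show (4:ℝ) * ε = ε + ε + (ε + ε) by ring,
            ENNReal.ofReal_add (by linarith) (by linarith),
            ENNReal.ofReal_add (by linarith) (by linarith)]
  rw [hUo.measurableSet.measure_eq_iSup_isCompact]
  exact iSup_le fun K => iSup_le fun hKU => iSup_le fun hKc => hcpt K hKc hKU

end Key

/-- orthogonal complex Radon measures are mutually alien (singular). -/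
theorem orthogonal_imp_alien {X : Type*} [TopologicalSpace X] [LocallyCompactSpace X]
    [T2Space X] [MeasurableSpace X] [BorelSpace X]
    (μ ν : MeasureTheory.ComplexMeasure X)
    (hμout : (cmVariation μ).OuterRegular) (hνout : (cmVariation ν).OuterRegular)
    (hμin : (cmVariation μ).InnerRegular) (hνin : (cmVariation ν).InnerRegular)
    (horth : ∀ ε : ℝ, 0 < ε → ∃ U V : Set X, IsOpen U ∧ IsOpen V ∧ U ∪ V = Set.univ ∧
      (∀ φ : X → ℂ, Continuous φ → HasCompactSupport φ → tsupport φ ⊆ U →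
        ‖cmIntegral μ φ‖ ≤ ε * ⨆ x, ‖φ x‖) ∧
      (∀ φ : X → ℂ, Continuous φ → HasCompactSupport φ → tsupport φ ⊆ V →
        ‖cmIntegral ν φ‖ ≤ ε * ⨆ x, ‖φ x‖)) :
    ∃ R S : Set X, MeasurableSet R ∧ MeasurableSet S ∧ Disjoint R S ∧
      cmVariation μ Rᶜ = 0 ∧ cmVariation ν Sᶜ = 0 := by
  rcases isEmpty_or_nonempty X with hX | hX
  · refine ⟨∅, ∅, MeasurableSet.empty, MeasurableSet.empty, disjoint_bot_left, ?_, ?_⟩ <;>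
    · have huniv : ((∅ : Set X)ᶜ : Set X) = ∅ := by
        rw [Set.compl_empty]
        exact Set.univ_eq_empty_iff.2 hX
      rw [huniv]
      exact measure_empty
  · choose Uf Vf hUo hVo hUV hUb hVb using fun n : ℕ =>
      horth ((1/2) ^ n) (by positivity)
    have hμU : ∀ n, cmVariation μ (Uf n) ≤ ENNReal.ofReal (4 * (1/2) ^ n) := fun n =>
      var_open_le μ hμout hμin (hUo n) (by positivity) (hUb n)
    have hνV : ∀ n, cmVariation ν (Vf n) ≤ ENNReal.ofReal (4 * (1/2) ^ n) := fun n =>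
      var_open_le ν hνout hνin (hVo n) (by positivity) (hVb n)
    set A : Set X := ⋂ m, ⋃ n, Uf (m + n) with hA
    set B : Set X := ⋂ m, ⋃ n, Vf (m + n) with hB
    have hAm : MeasurableSet A :=
      MeasurableSet.iInter fun m => MeasurableSet.iUnion fun n => (hUo _).measurableSet
    have hBm : MeasurableSet B :=
      MeasurableSet.iInter fun m => MeasurableSet.iUnion fun n => (hVo _).measurableSet
    have hzero : ∀ (W : Set X) (ρ : Measure X),
        (∀ n, ρ (W) ≤ ENNReal.ofReal (8 * (1/2) ^ n)) → ρ W = 0 := by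
      intro W ρ hb
      refine le_antisymm ?_ (zero_le)
      have htend : Tendsto (fun m : ℕ => ENNReal.ofReal (8 * (1/2 : ℝ) ^ m)) atTop (nhds 0) := by
        have h0 : Tendsto (fun m : ℕ => 8 * (1/2 : ℝ) ^ m) atTop (nhds 0) := by
          simpa using (tendsto_pow_atTop_nhds_zero_of_lt_one (by norm_num : (0:ℝ) ≤ 1/2)
            (by norm_num : (1/2 : ℝ) < 1)).const_mul (8:ℝ)
        simpa using ENNReal.tendsto_ofReal h0
      exact ge_of_tendsto' htend hb
    have hbound : ∀ (f : ℕ → Set X) (ρ : Measure X),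
        (∀ n, ρ (f n) ≤ ENNReal.ofReal (4 * (1/2) ^ n)) →
        ∀ m : ℕ, ρ (⋂ k, ⋃ n, f (k + n)) ≤ ENNReal.ofReal (8 * (1/2) ^ m) := by
      intro f ρ hf m
      have hsummable : Summable (fun n : ℕ => 4 * (1/2 : ℝ) ^ (m + n)) := by
        have : Summable (fun n : ℕ => (1/2 : ℝ) ^ n) :=
          summable_geometric_of_lt_one (by norm_num) (by norm_num)
        simpa [pow_add, mul_assoc, mul_comm, mul_left_comm] using
          (this.mul_left (4 * (1/2 : ℝ) ^ m))
      calc ρ (⋂ k, ⋃ n, f (k + n)) ≤ ρ (⋃ n, f (m + n)) :=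
            measure_mono (Set.iInter_subset _ m)
        _ ≤ ∑' n, ρ (f (m + n)) := measure_iUnion_le _
        _ ≤ ∑' n : ℕ, ENNReal.ofReal (4 * (1/2) ^ (m + n)) :=
            ENNReal.tsum_le_tsum fun n => hf (m + n)
        _ = ENNReal.ofReal (∑' n : ℕ, 4 * (1/2 : ℝ) ^ (m + n)) :=
            (ENNReal.ofReal_tsum_of_nonneg (fun n => by positivity) hsummable).symm
        _ = ENNReal.ofReal (8 * (1/2) ^ m) := by
            congr 1
            have : (fun n : ℕ => 4 * (1/2 : ℝ) ^ (m + n))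
                = fun n : ℕ => (4 * (1/2 : ℝ) ^ m) * (1/2 : ℝ) ^ n := by
              funext n; rw [pow_add]; ring
            rw [this, tsum_mul_left, tsum_geometric_of_lt_one (by norm_num) (by norm_num)]
            norm_num
            ring
    refine ⟨Aᶜ, Bᶜ, hAm.compl, hBm.compl, ?_, ?_, ?_⟩
    · rw [Set.disjoint_left]
      intro x hxA hxB
      simp only [Set.mem_compl_iff, hA, hB, Set.mem_iInter, Set.mem_iUnion, not_forall,
        not_exists] at hxA hxB
      obtain ⟨m₁, hm₁⟩ := hxA
      obtain ⟨m₂, hm₂⟩ := hxB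
      have h1 : x ∉ Uf (m₁ + (max m₁ m₂ - m₁)) := hm₁ _
      have h2 : x ∉ Vf (m₂ + (max m₁ m₂ - m₂)) := hm₂ _
      rw [Nat.add_sub_cancel' (le_max_left m₁ m₂)] at h1
      rw [Nat.add_sub_cancel' (le_max_right m₁ m₂)] at h2
      have := hUV (max m₁ m₂)
      have hx : x ∈ Uf (max m₁ m₂) ∪ Vf (max m₁ m₂) := this ▸ Set.mem_univ x
      rcases hx with hx | hx
      · exact h1 hx
      · exact h2 hx
    · rw [compl_compl]
      exact hzero A (cmVariation μ) (hbound Uf (cmVariation μ) hμU)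
    · rw [compl_compl]
      exact hzero B (cmVariation ν) (hbound Vf (cmVariation ν) hνV)
end

section
/- Let Ω ⊆ ℝ^d be a nonempty open set, let σ : Ω × ℝ^d → ℂ be continuous and ℤ^d-periodic in its second variable (σ(x, y + k) = σ(x, y) for all k ∈ ℤ^d), let (ε_n) be a sequence of positive reals with ε_n → 0, and let q ∈ ℤ^d. Define the q-th Fourier coefficient in the second variable by σ̂(x, q) = ∫_{[0,1]^d} σ(x, y) e^{−2πi q·y} dy. Then for every φ ∈ C_c(Ω): ∫_Ω σ(x, x/ε_n) e^{−2πi q·x/ε_n} φ(x) dx → ∫_Ω σ̂(x, q) φ(x) dx as n → ∞. -/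
open MeasureTheory Filter Topology Complex

namespace OscAux
noncomputable section
open scoped Classical
set_option linter.unusedSectionVars false
variable {d : ℕ}

instance fact01 : Fact ((0:ℝ) < 1) := ⟨one_pos⟩

abbrev Tor (d : ℕ) := Fin d → AddCircle (1 : ℝ)

def tpi (y : Fin d → ℝ) : Tor d := fun i => (y i : AddCircle (1:ℝ))

lemma isOpenQuotientMap_tpi : IsOpenQuotientMap (tpi (d := d)) :=
  IsOpenQuotientMap.piMap fun _ => QuotientAddGroup.isOpenQuotientMap_mk

lemma continuous_tpi : Continuous (tpi (d := d)) := isOpenQuotientMap_tpi.continuous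

lemma tpi_eq_iff (y y' : Fin d → ℝ) (h : tpi y = tpi y') :
    ∃ k : Fin d → ℤ, y' = y + fun i => (k i : ℝ) := by
  have h' : ∀ i, ∃ n : ℤ, y' i - y i = n := by
    intro i
    have hi : (y i : AddCircle (1:ℝ)) = (y' i : AddCircle (1:ℝ)) := congrFun h i
    rw [QuotientAddGroup.eq_iff_sub_mem] at hi
    obtain ⟨n, hn⟩ := AddSubgroup.mem_zmultiples_iff.mp hi
    refine ⟨-n, ?_⟩
    rw [zsmul_eq_mul, mul_one] at hn
    push_cast
    linarith
  choose k hk using h'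
  refine ⟨k, ?_⟩
  funext i
  have := hk i
  simp only [Pi.add_apply]
  linarith

def box (d : ℕ) : Set (Fin d → ℝ) := Set.univ.pi fun _ : Fin d => Set.Icc (0:ℝ) 1

lemma measurableSet_box : MeasurableSet (box d) :=
  MeasurableSet.univ_pi fun _ => measurableSet_Icc

lemma isCompact_box : IsCompact (box d) := isCompact_univ_pi fun _ => isCompact_Icc

lemma volume_box : volume (box d) = 1 := by
  rw [box, volume_pi_pi]
  simp

lemma volume_box_toReal : (volume (box d)).toReal = 1 := by rw [volume_box]; rfl

def chr (m : Fin d → ℤ) : C(Tor d, ℂ) :=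
  ⟨fun z => ∏ i, fourier (m i) (z i),
    continuous_finset_prod _ fun i _ => (fourier (m i)).continuous.comp (continuous_apply i)⟩

lemma chr_apply (m : Fin d → ℤ) (z : Tor d) : chr m z = ∏ i, fourier (m i) (z i) := rfl

lemma chr_tpi (m : Fin d → ℤ) (y : Fin d → ℝ) :
    chr m (tpi y) = Complex.exp (2 * Real.pi * Complex.I * ∑ i, (m i : ℂ) * (y i : ℂ)) := by
  rw [chr_apply, Finset.mul_sum, Complex.exp_sum]
  refine Finset.prod_congr rfl fun i _ => ?_
  rw [tpi, fourier_coe_apply]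
  push_cast
  ring_nf

lemma chr_zero : chr (0 : Fin d → ℤ) = 1 := by
  ext z
  rw [chr_apply]
  simp [fourier_zero]

variable (K : Set (Fin d → ℝ)) [CompactSpace ↥K]

def tens (a : C(↥K, ℂ)) (m : Fin d → ℤ) : C(↥K × Tor d, ℂ) :=
  ⟨fun p => a p.1 * chr m p.2,
    (a.continuous.comp continuous_fst).mul ((chr m).continuous.comp continuous_snd)⟩

lemma tens_apply (a : C(↥K, ℂ)) (m : Fin d → ℤ) (p : ↥K × Tor d) :
    tens K a m p = a p.1 * chr m p.2 := rfl

/-- extension by zero of a continuous function on `K`. -/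
def ext0 (a : C(↥K, ℂ)) (x : Fin d → ℝ) : ℂ :=
  if hx : x ∈ K then a ⟨x, hx⟩ else 0

/-- extension by zero of a function on `↥K × Tor d`, second variable pulled back to `ℝ^d`. -/
def gg (g : C(↥K × Tor d, ℂ)) (x y : Fin d → ℝ) : ℂ :=
  if hx : x ∈ K then g (⟨x, hx⟩, tpi y) else 0

lemma gg_of_mem (g : C(↥K × Tor d, ℂ)) {x : Fin d → ℝ} (hx : x ∈ K) (y : Fin d → ℝ) :
    gg K g x y = g (⟨x, hx⟩, tpi y) := dif_pos hx

lemma gg_sub (g g' : C(↥K × Tor d, ℂ)) (x y : Fin d → ℝ) :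
    gg K (g - g') x y = gg K g x y - gg K g' x y := by
  unfold gg
  by_cases hx : x ∈ K <;> simp [hx]

lemma gg_add (g g' : C(↥K × Tor d, ℂ)) (x y : Fin d → ℝ) :
    gg K (g + g') x y = gg K g x y + gg K g' x y := by
  unfold gg
  by_cases hx : x ∈ K <;> simp [hx]

lemma gg_smul (c : ℂ) (g : C(↥K × Tor d, ℂ)) (x y : Fin d → ℝ) :
    gg K (c • g) x y = c * gg K g x y := by
  unfold gg
  by_cases hx : x ∈ K <;> simp [hx]

lemma gg_zero (x y : Fin d → ℝ) : gg K (0 : C(↥K × Tor d, ℂ)) x y = 0 := by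
  unfold gg
  by_cases hx : x ∈ K <;> simp [hx]

lemma gg_norm_le (g : C(↥K × Tor d, ℂ)) (x y : Fin d → ℝ) : ‖gg K g x y‖ ≤ ‖g‖ := by
  unfold gg
  by_cases hx : x ∈ K
  · rw [dif_pos hx]
    exact g.norm_coe_le_norm _
  · rw [dif_neg hx]
    simp

lemma gg_contOn (g : C(↥K × Tor d, ℂ)) {c : (Fin d → ℝ) → (Fin d → ℝ)} (hc : Continuous c) :
    ContinuousOn (fun x => gg K g x (c x)) K := by
  rw [continuousOn_iff_continuous_restrict]
  have : K.domRestrict (fun x => gg K g x (c x)) = fun k : ↥K => g (k, tpi (c ↑k)) := by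
    funext k
    show gg K g ↑k (c ↑k) = _
    rw [gg_of_mem K g k.2]
  rw [this]
  exact g.continuous.comp (continuous_id.prodMk
    (continuous_tpi.comp (hc.comp continuous_subtype_val)))

lemma ext0_contOn (a : C(↥K, ℂ)) : ContinuousOn (ext0 K a) K := by
  rw [continuousOn_iff_continuous_restrict]
  have : K.domRestrict (ext0 K a) = fun k : ↥K => a k := by
    funext k
    show ext0 K a ↑k = _
    rw [ext0, dif_pos k.2]
  rw [this]
  exact a.continuous

lemma ext0_norm_le (a : C(↥K, ℂ)) (x : Fin d → ℝ) : ‖ext0 K a x‖ ≤ ‖a‖ := by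
  rw [ext0]
  by_cases hx : x ∈ K
  · rw [dif_pos hx]; exact a.norm_coe_le_norm _
  · rw [dif_neg hx]; simp

lemma gg_tens (a : C(↥K, ℂ)) (m : Fin d → ℤ) (x y : Fin d → ℝ) :
    gg K (tens K a m) x y
      = ext0 K a x * Complex.exp (2 * Real.pi * Complex.I * ∑ i, (m i : ℂ) * (y i : ℂ)) := by
  unfold gg ext0
  by_cases hx : x ∈ K
  · rw [dif_pos hx, dif_pos hx, tens_apply, chr_tpi]
  · rw [dif_neg hx, dif_neg hx, zero_mul]

lemma hKcomp : IsCompact K := isCompact_iff_compactSpace.mpr inferInstance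

lemma hKmeas : MeasurableSet K := (hKcomp K).isClosed.measurableSet

/-- the mean over the torus of a continuous function, via the box. -/
def meanC (u : C(Tor d, ℂ)) : ℂ := ∫ y in box d, u (tpi y)

lemma meanC_integrable (u : C(Tor d, ℂ)) : IntegrableOn (fun y => u (tpi y)) (box d) :=
  ((u.continuous.comp continuous_tpi).continuousOn).integrableOn_compact isCompact_box

lemma meanC_norm_le (u : C(Tor d, ℂ)) : ‖meanC u‖ ≤ ‖u‖ := by
  have hb : IntegrableOn (fun _ : Fin d → ℝ => ‖u‖) (box d) := by
    apply (integrableOn_const_iff (C := ‖u‖)).mpr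
    right
    rw [volume_box]
    exact ENNReal.one_lt_top
  have := norm_integral_le_of_norm_le hb
    (Eventually.of_forall fun y => u.norm_coe_le_norm (tpi y))
  rw [setIntegral_const, measureReal_def, volume_box_toReal, one_smul] at this
  exact this

lemma meanC_sub (u v : C(Tor d, ℂ)) : meanC (u - v) = meanC u - meanC v := by
  unfold meanC
  rw [← integral_sub (meanC_integrable u) (meanC_integrable v)]
  rfl

lemma meanC_cont : Continuous (meanC (d := d)) := by
  apply LipschitzWith.continuous (K := 1)
  apply LipschitzWith.of_dist_le_mul
  intro u v
  rw [NNReal.coe_one, one_mul, dist_eq_norm, dist_eq_norm, ← meanC_sub]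
  exact meanC_norm_le _

variable (φ : (Fin d → ℝ) → ℂ) (ε : ℕ → ℝ)

def Rn (g : C(↥K × Tor d, ℂ)) (n : ℕ) : ℂ := ∫ x in K, gg K g x ((ε n)⁻¹ • x) * φ x

def mea (g : C(↥K × Tor d, ℂ)) (x : Fin d → ℝ) : ℂ := ∫ y in box d, gg K g x y

def Lv (g : C(↥K × Tor d, ℂ)) : ℂ := ∫ x in K, mea K g x * φ x

def P (g : C(↥K × Tor d, ℂ)) : Prop := Tendsto (Rn K φ ε g) atTop (𝓝 (Lv K φ g))

variable {φ}

lemma integrableR (hφ : Continuous φ) (g : C(↥K × Tor d, ℂ)) (c : ℝ) :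
    IntegrableOn (fun x => gg K g x (c • x) * φ x) K :=
  ((gg_contOn K g (continuous_const_smul c)).mul hφ.continuousOn).integrableOn_compact (hKcomp K)

lemma mea_restrict (g : C(↥K × Tor d, ℂ)) (k : ↥K) :
    mea K g ↑k = meanC (g.curry k) := by
  unfold mea meanC
  refine integral_congr_ae (Eventually.of_forall fun y => ?_)
  dsimp only
  rw [gg_of_mem K g k.2, ContinuousMap.curry_apply]

lemma mea_contOn (g : C(↥K × Tor d, ℂ)) : ContinuousOn (mea K g) K := by
  rw [continuousOn_iff_continuous_restrict]
  have : K.domRestrict (mea K g) = fun k : ↥K => meanC (g.curry k) := by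
    funext k
    exact mea_restrict K g k
  rw [this]
  exact meanC_cont.comp ((g.curry).continuous)

lemma mea_norm_le (g : C(↥K × Tor d, ℂ)) (x : Fin d → ℝ) : ‖mea K g x‖ ≤ ‖g‖ := by
  have hb : IntegrableOn (fun _ : Fin d → ℝ => ‖g‖) (box d) := by
    apply (integrableOn_const_iff (C := ‖g‖)).mpr
    right
    rw [volume_box]
    exact ENNReal.one_lt_top
  have := norm_integral_le_of_norm_le hb
    (Eventually.of_forall fun y => gg_norm_le K g x y)
  rw [setIntegral_const, measureReal_def, volume_box_toReal, one_smul] at this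
  exact this

lemma mea_integrable (g : C(↥K × Tor d, ℂ)) (x : Fin d → ℝ) :
    IntegrableOn (fun y => gg K g x y) (box d) := by
  by_cases hx : x ∈ K
  · have : (fun y => gg K g x y) = fun y => g (⟨x, hx⟩, tpi y) := by
      funext y
      exact gg_of_mem K g hx y
    rw [this]
    exact ((g.continuous.comp ((Continuous.prodMk_right _).comp
      continuous_tpi)).continuousOn).integrableOn_compact isCompact_box
  · have : (fun y => gg K g x y) = fun _ => (0:ℂ) := by
      funext y
      unfold gg
      rw [dif_neg hx]
    rw [this]
    exact (integrableOn_const_iff (C := (0:ℂ))).mpr (Or.inl enorm_zero)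

lemma integrableL (hφ : Continuous φ) (g : C(↥K × Tor d, ℂ)) :
    IntegrableOn (fun x => mea K g x * φ x) K :=
  ((mea_contOn K g).mul hφ.continuousOn).integrableOn_compact (hKcomp K)

lemma integrable_phinorm (hφ : Continuous φ) : IntegrableOn (fun x => ‖φ x‖) K :=
  (hφ.norm.continuousOn).integrableOn_compact (hKcomp K)

lemma Rn_sub (hφ : Continuous φ) (g g' : C(↥K × Tor d, ℂ)) (n : ℕ) :
    Rn K φ ε (g - g') n = Rn K φ ε g n - Rn K φ ε g' n := by
  unfold Rn
  rw [← integral_sub (integrableR K hφ g _) (integrableR K hφ g' _)]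
  refine integral_congr_ae (Eventually.of_forall fun x => ?_)
  dsimp only
  rw [gg_sub]
  ring

lemma Rn_add (hφ : Continuous φ) (g g' : C(↥K × Tor d, ℂ)) (n : ℕ) :
    Rn K φ ε (g + g') n = Rn K φ ε g n + Rn K φ ε g' n := by
  unfold Rn
  rw [← integral_add (integrableR K hφ g _) (integrableR K hφ g' _)]
  refine integral_congr_ae (Eventually.of_forall fun x => ?_)
  dsimp only
  rw [gg_add]
  ring

lemma Rn_smul (c : ℂ) (g : C(↥K × Tor d, ℂ)) (n : ℕ) :
    Rn K φ ε (c • g) n = c * Rn K φ ε g n := by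
  unfold Rn
  rw [← integral_const_mul]
  refine integral_congr_ae (Eventually.of_forall fun x => ?_)
  dsimp only
  rw [gg_smul]
  ring

lemma Rn_bound (hφ : Continuous φ) (g : C(↥K × Tor d, ℂ)) (n : ℕ) :
    ‖Rn K φ ε g n‖ ≤ ‖g‖ * ∫ x in K, ‖φ x‖ := by
  have hb : IntegrableOn (fun x => ‖g‖ * ‖φ x‖) K :=
    (integrable_phinorm K hφ).const_mul _
  unfold Rn
  have h1 := norm_integral_le_of_norm_le
    (f := fun x => gg K g x ((ε n)⁻¹ • x) * φ x) hb (Eventually.of_forall fun x => by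
      rw [norm_mul]
      exact mul_le_mul_of_nonneg_right (gg_norm_le K g x _) (norm_nonneg _))
  rw [integral_const_mul] at h1
  exact h1

lemma mea_sub (g g' : C(↥K × Tor d, ℂ)) (x : Fin d → ℝ) :
    mea K (g - g') x = mea K g x - mea K g' x := by
  unfold mea
  rw [← integral_sub (mea_integrable K g x) (mea_integrable K g' x)]
  refine integral_congr_ae (Eventually.of_forall fun y => ?_)
  dsimp only
  rw [gg_sub]

lemma mea_add (g g' : C(↥K × Tor d, ℂ)) (x : Fin d → ℝ) :
    mea K (g + g') x = mea K g x + mea K g' x := by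
  unfold mea
  rw [← integral_add (mea_integrable K g x) (mea_integrable K g' x)]
  refine integral_congr_ae (Eventually.of_forall fun y => ?_)
  dsimp only
  rw [gg_add]

lemma mea_smul (c : ℂ) (g : C(↥K × Tor d, ℂ)) (x : Fin d → ℝ) :
    mea K (c • g) x = c * mea K g x := by
  unfold mea
  rw [← integral_const_mul]
  refine integral_congr_ae (Eventually.of_forall fun y => ?_)
  dsimp only
  rw [gg_smul]

lemma Lv_sub (hφ : Continuous φ) (g g' : C(↥K × Tor d, ℂ)) :
    Lv K φ (g - g') = Lv K φ g - Lv K φ g' := by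
  unfold Lv
  rw [← integral_sub (integrableL K hφ g) (integrableL K hφ g')]
  refine integral_congr_ae (Eventually.of_forall fun x => ?_)
  dsimp only
  rw [mea_sub]
  ring

lemma Lv_add (hφ : Continuous φ) (g g' : C(↥K × Tor d, ℂ)) :
    Lv K φ (g + g') = Lv K φ g + Lv K φ g' := by
  unfold Lv
  rw [← integral_add (integrableL K hφ g) (integrableL K hφ g')]
  refine integral_congr_ae (Eventually.of_forall fun x => ?_)
  dsimp only
  rw [mea_add]
  ring

lemma Lv_smul (c : ℂ) (g : C(↥K × Tor d, ℂ)) :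
    Lv K φ (c • g) = c * Lv K φ g := by
  unfold Lv
  rw [← integral_const_mul]
  refine integral_congr_ae (Eventually.of_forall fun x => ?_)
  dsimp only
  rw [mea_smul]
  ring

lemma Lv_bound (hφ : Continuous φ) (g : C(↥K × Tor d, ℂ)) :
    ‖Lv K φ g‖ ≤ ‖g‖ * ∫ x in K, ‖φ x‖ := by
  have hb : IntegrableOn (fun x => ‖g‖ * ‖φ x‖) K :=
    (integrable_phinorm K hφ).const_mul _
  unfold Lv
  have h1 := norm_integral_le_of_norm_le
    (f := fun x => mea K g x * φ x) hb (Eventually.of_forall fun x => by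
      rw [norm_mul]
      exact mul_le_mul_of_nonneg_right (mea_norm_le K g x) (norm_nonneg _))
  rw [integral_const_mul] at h1
  exact h1

-- 1-d oscillatory integral
lemma int_Icc_exp (k : ℤ) (hk : k ≠ 0) :
    ∫ t in Set.Icc (0:ℝ) 1, Complex.exp ((2 * Real.pi * Complex.I * k) * t) = 0 := by
  have hc : (2 * Real.pi * Complex.I * k : ℂ) ≠ 0 := by
    apply mul_ne_zero
    · apply mul_ne_zero
      · norm_num [Real.pi_ne_zero]
      · exact Complex.I_ne_zero
    · exact_mod_cast hk
  rw [integral_Icc_eq_integral_Ioc, ← intervalIntegral.integral_of_le zero_le_one,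
    integral_exp_mul_complex hc]
  have h1 : Complex.exp (2 * Real.pi * Complex.I * k * (1:ℝ)) = 1 := by
    push_cast
    rw [mul_one]
    have := Complex.exp_int_mul_two_pi_mul_I k
    rw [← this]
    ring_nf
  rw [h1]
  push_cast
  rw [mul_zero, Complex.exp_zero, sub_self, zero_div]

lemma box_int_chr (m : Fin d → ℤ) (hm : m ≠ 0) :
    ∫ y in box d, Complex.exp (2 * Real.pi * Complex.I * ∑ i, (m i : ℂ) * (y i : ℂ)) = 0 := by
  have key : ∀ y : Fin d → ℝ,
      Complex.exp (2 * Real.pi * Complex.I * ∑ i, (m i : ℂ) * (y i : ℂ))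
        = ∏ i, Complex.exp ((2 * Real.pi * Complex.I * m i) * (y i : ℂ)) := by
    intro y
    rw [Finset.mul_sum, Complex.exp_sum]
    exact Finset.prod_congr rfl fun i _ => by ring_nf
  simp only [key]
  have hind : ∀ y : Fin d → ℝ,
      (box d).indicator (fun y : Fin d → ℝ =>
        ∏ i, Complex.exp ((2 * Real.pi * Complex.I * m i) * (y i : ℂ))) y
      = ∏ i, (Set.Icc (0:ℝ) 1).indicator
          (fun t : ℝ => Complex.exp ((2 * Real.pi * Complex.I * m i) * (t : ℂ))) (y i) := by
    intro y
    by_cases hy : y ∈ box d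
    · rw [Set.indicator_of_mem hy]
      refine Finset.prod_congr rfl fun i _ => ?_
      rw [Set.indicator_of_mem (hy i (Set.mem_univ i))]
    · rw [Set.indicator_of_notMem hy]
      rw [box, Set.mem_univ_pi] at hy
      push_neg at hy
      obtain ⟨i, hi⟩ := hy
      exact (Finset.prod_eq_zero (Finset.mem_univ i)
        (by rw [Set.indicator_of_notMem hi])).symm
  rw [← integral_indicator measurableSet_box]
  simp only [hind]
  rw [volume_pi, MeasureTheory.integral_fintype_prod_eq_prod
    (f := fun i t => (Set.Icc (0:ℝ) 1).indicator
      (fun t : ℝ => Complex.exp ((2 * Real.pi * Complex.I * m i) * (t : ℂ))) t)]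
  obtain ⟨i, hi⟩ := Function.ne_iff.mp hm
  refine Finset.prod_eq_zero (Finset.mem_univ i) ?_
  rw [integral_indicator measurableSet_Icc]
  exact int_Icc_exp (m i) hi

lemma rl (h : (Fin d → ℝ) → ℂ) (m : Fin d → ℤ) (hm : m ≠ 0)
    (ε : ℕ → ℝ) (hε : ∀ n, 0 < ε n) (hε0 : Tendsto ε atTop (𝓝 0)) :
    Tendsto (fun n => ∫ x : Fin d → ℝ,
        h x * Complex.exp (2 * Real.pi * Complex.I *
          ((ε n)⁻¹ * ∑ i, (m i : ℂ) * (x i : ℂ))))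
      atTop (𝓝 0) := by
  classical
  set Lm : (Fin d → ℝ) →L[ℝ] ℝ := ∑ i, (m i : ℝ) • ContinuousLinearMap.proj i with hLm
  have hLmapp : ∀ x, Lm x = ∑ i, (m i : ℝ) * x i := by
    intro x
    simp [hLm, ContinuousLinearMap.sum_apply]
  have hLmne : Lm ≠ 0 := by
    obtain ⟨i, hi⟩ := Function.ne_iff.mp hm
    intro hc
    have : Lm (Pi.single i 1) = 0 := by rw [hc]; rfl
    rw [hLmapp] at this
    rw [Finset.sum_eq_single i (fun j _ hj => by rw [Pi.single_eq_of_ne hj, mul_zero])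
      (fun hni => absurd (Finset.mem_univ i) hni)] at this
    simp at this
    exact hi (by exact_mod_cast this)
  have hLmpos : 0 < ‖Lm‖ := norm_pos_iff.mpr hLmne
  set w : ℕ → ((Fin d → ℝ) →L[ℝ] ℝ) := fun n => -((ε n)⁻¹ • Lm) with hw
  have hwnorm : ∀ n, ‖w n‖ = (ε n)⁻¹ * ‖Lm‖ := by
    intro n
    show ‖-((ε n)⁻¹ • Lm)‖ = _
    rw [norm_neg]
    have h2 := norm_smul ((ε n)⁻¹) Lm
    rw [Real.norm_eq_abs, abs_of_pos (inv_pos.mpr (hε n))] at h2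
    exact h2
  have hwc : Tendsto w atTop (cocompact _) := by
    apply tendsto_cocompact_of_tendsto_dist_comp_atTop (0 : (Fin d → ℝ) →L[ℝ] ℝ)
    simp only [dist_zero_right]
    simp only [hwnorm]
    have hinv : Tendsto (fun n => (ε n)⁻¹) atTop atTop := by
      apply Filter.Tendsto.inv_tendsto_nhdsGT_zero
      exact tendsto_nhdsWithin_of_tendsto_nhds_of_eventually_within _ hε0
        (Eventually.of_forall fun n => hε n)
    exact hinv.atTop_mul_const hLmpos
  have hrl := (tendsto_integral_exp_smul_cocompact h volume).comp hwc
  have heq : ((fun w : (Fin d → ℝ) →L[ℝ] ℝ => ∫ v, Real.fourierChar (-(w v)) • h v) ∘ w)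
      = fun n => ∫ x : Fin d → ℝ,
        h x * Complex.exp (2 * Real.pi * Complex.I *
          ((ε n)⁻¹ * ∑ i, (m i : ℂ) * (x i : ℂ))) := by
    funext n
    refine integral_congr_ae (Eventually.of_forall fun x => ?_)
    show Real.fourierChar (-(w n x)) • h x = _
    have hwnx : -(w n x) = (ε n)⁻¹ * Lm x := by
      show -((-((ε n)⁻¹ • Lm)) x) = _
      rw [ContinuousLinearMap.neg_apply, ContinuousLinearMap.smul_apply]
      simp
    rw [hwnx, Circle.smul_def, smul_eq_mul, Real.fourierChar_apply]
    rw [mul_comm _ (h x)]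
    congr 1
    rw [hLmapp]
    push_cast
    ring
  rw [← heq]
  exact hrl

lemma mea_tens (a : C(↥K, ℂ)) (m : Fin d → ℤ) (x : Fin d → ℝ) :
    mea K (tens K a m) x
      = ext0 K a x * ∫ y in box d,
          Complex.exp (2 * Real.pi * Complex.I * ∑ i, (m i : ℂ) * (y i : ℂ)) := by
  unfold mea
  rw [← integral_const_mul]
  refine integral_congr_ae (Eventually.of_forall fun y => ?_)
  dsimp only
  rw [gg_tens]

lemma P_tens (hφ : Continuous φ) (hε : ∀ n, 0 < ε n) (hε0 : Tendsto ε atTop (𝓝 0))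
    (a : C(↥K, ℂ)) (m : Fin d → ℤ) : P K φ ε (tens K a m) := by
  unfold P
  by_cases hm : m = 0
  · subst hm
    have hR : ∀ n, Rn K φ ε (tens K a 0) n = ∫ x in K, ext0 K a x * φ x := by
      intro n
      unfold Rn
      refine integral_congr_ae (Eventually.of_forall fun x => ?_)
      dsimp only
      rw [gg_tens]
      simp
    have hL : Lv K φ (tens K a 0) = ∫ x in K, ext0 K a x * φ x := by
      unfold Lv
      refine integral_congr_ae (Eventually.of_forall fun x => ?_)
      dsimp only
      rw [mea_tens]
      congr 1
      simp only [Int.cast_zero, Pi.zero_apply, zero_mul, Finset.sum_const_zero, mul_zero,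
        Complex.exp_zero]
      rw [setIntegral_const, measureReal_def, volume_box_toReal, one_smul, mul_one]
    rw [hL]
    rw [funext hR]
    exact tendsto_const_nhds
  · have hL : Lv K φ (tens K a m) = 0 := by
      unfold Lv
      have : ∀ x, mea K (tens K a m) x * φ x = 0 := by
        intro x
        rw [mea_tens, box_int_chr m hm, mul_zero, zero_mul]
      simp only [this]
      exact integral_zero _ _
    have hexp : ∀ n (x : Fin d → ℝ),
        (2 * Real.pi * Complex.I * ∑ i, (m i : ℂ) * ((((ε n)⁻¹ • x) i : ℝ) : ℂ))
          = 2 * Real.pi * Complex.I * (((ε n)⁻¹ : ℝ) * ∑ i, (m i : ℂ) * ((x i : ℝ) : ℂ)) := by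
      intro n x
      congr 1
      rw [Finset.mul_sum]
      refine Finset.sum_congr rfl fun i _ => ?_
      have hxi : ((ε n)⁻¹ • x) i = (ε n)⁻¹ * x i := rfl
      rw [hxi]
      push_cast
      ring
    have hR : ∀ n, Rn K φ ε (tens K a m) n
        = ∫ x : Fin d → ℝ, (K.indicator fun x' => ext0 K a x' * φ x') x *
            Complex.exp (2 * Real.pi * Complex.I *
              (((ε n)⁻¹ : ℝ) * ∑ i, (m i : ℂ) * ((x i : ℝ) : ℂ))) := by
      intro n
      unfold Rn
      rw [← integral_indicator (hKmeas K)]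
      refine integral_congr_ae (Eventually.of_forall fun x => ?_)
      dsimp only
      by_cases hx : x ∈ K
      · rw [Set.indicator_of_mem hx, Set.indicator_of_mem hx, gg_tens, hexp]
        ring
      · rw [Set.indicator_of_notMem hx, Set.indicator_of_notMem hx, zero_mul]
    rw [hL]
    rw [funext hR]
    exact rl (K.indicator fun x' => ext0 K a x' * φ x') m hm ε hε hε0

lemma P_zero : P K φ ε 0 := by
  unfold P
  have hR : ∀ n, Rn K φ ε 0 n = 0 := by
    intro n
    unfold Rn
    simp only [gg_zero, zero_mul]
    exact integral_zero _ _
  have hL : Lv K φ 0 = 0 := by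
    unfold Lv
    have : ∀ x, mea K (0 : C(↥K × Tor d, ℂ)) x = 0 := by
      intro x
      unfold mea
      simp only [gg_zero]
      exact integral_zero _ _
    simp only [this, zero_mul]
    exact integral_zero _ _
  rw [hL]
  rw [funext hR]
  exact tendsto_const_nhds

lemma P_add (hφ : Continuous φ) {g g' : C(↥K × Tor d, ℂ)}
    (hg : P K φ ε g) (hg' : P K φ ε g') : P K φ ε (g + g') := by
  unfold P
  have hL : Lv K φ (g + g') = Lv K φ g + Lv K φ g' := Lv_add K hφ g g'
  rw [hL]
  have hR : Rn K φ ε (g + g') = fun n => Rn K φ ε g n + Rn K φ ε g' n := by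
    funext n
    exact Rn_add K ε hφ g g' n
  rw [hR]
  exact hg.add hg'

lemma P_smul (hφ : Continuous φ) (c : ℂ) {g : C(↥K × Tor d, ℂ)}
    (hg : P K φ ε g) : P K φ ε (c • g) := by
  unfold P
  rw [Lv_smul]
  have hR : Rn K φ ε (c • g) = fun n => c * Rn K φ ε g n := by
    funext n
    exact Rn_smul K ε c g n
  rw [hR]
  exact hg.const_mul c

lemma chr_add (m m' : Fin d → ℤ) (z : Tor d) :
    chr (m + m') z = chr m z * chr m' z := by
  rw [chr_apply, chr_apply, chr_apply, ← Finset.prod_mul_distrib]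
  refine Finset.prod_congr rfl fun i _ => ?_
  rw [Pi.add_apply, fourier_add]

lemma chr_neg (m : Fin d → ℤ) (z : Tor d) :
    chr (-m) z = (starRingEnd ℂ) (chr m z) := by
  rw [chr_apply, chr_apply, map_prod]
  refine Finset.prod_congr rfl fun i _ => ?_
  rw [Pi.neg_apply, fourier_neg]

lemma tens_mul (a a' : C(↥K, ℂ)) (m m' : Fin d → ℤ) :
    tens K a m * tens K a' m' = tens K (a * a') (m + m') := by
  ext p
  rw [ContinuousMap.mul_apply, tens_apply, tens_apply, tens_apply, chr_add,
    ContinuousMap.mul_apply]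
  ring

lemma tens_one : tens K 1 0 = (1 : C(↥K × Tor d, ℂ)) := by
  ext p
  rw [tens_apply, chr_zero]
  simp

lemma tens_star (a : C(↥K, ℂ)) (m : Fin d → ℤ) :
    star (tens K a m) = tens K (star a) (-m) := by
  ext p
  rw [ContinuousMap.star_apply, tens_apply, tens_apply, chr_neg, star_mul',
    ContinuousMap.star_apply]
  rfl

/-- The span of elementary tensors. -/
def Msub : Submodule ℂ C(↥K × Tor d, ℂ) :=
  Submodule.span ℂ {g | ∃ a m, g = tens K a m}

lemma Msub_mul_mem {x y : C(↥K × Tor d, ℂ)} (hx : x ∈ Msub K) (hy : y ∈ Msub K) :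
    x * y ∈ Msub K := by
  have h := Submodule.mul_mem_mul hx hy
  rw [Msub, Submodule.span_mul_span] at h
  refine Submodule.span_le.mpr ?_ h
  rintro g ⟨u, ⟨a, m, rfl⟩, v, ⟨a', m', rfl⟩, rfl⟩
  dsimp only
  rw [tens_mul]
  exact Submodule.subset_span ⟨a * a', m + m', rfl⟩

lemma Msub_one_mem : (1 : C(↥K × Tor d, ℂ)) ∈ Msub K := by
  rw [← tens_one K]
  exact Submodule.subset_span ⟨1, 0, rfl⟩

lemma Msub_star_mem {x : C(↥K × Tor d, ℂ)} (hx : x ∈ Msub K) : star x ∈ Msub K := by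
  refine Submodule.span_induction ?_ ?_ ?_ ?_ hx
  · rintro g ⟨a, m, rfl⟩
    rw [tens_star]
    exact Submodule.subset_span ⟨star a, -m, rfl⟩
  · rw [star_zero]
    exact (Msub K).zero_mem
  · intro u v _ _ hu hv
    rw [star_add]
    exact (Msub K).add_mem hu hv
  · intro c u _ hu
    rw [star_smul]
    exact (Msub K).smul_mem _ hu

/-- The star subalgebra of elementary tensors. -/
def Asub : StarSubalgebra ℂ C(↥K × Tor d, ℂ) where
  carrier := (Msub K : Set C(↥K × Tor d, ℂ))
  mul_mem' := fun hx hy => Msub_mul_mem K hx hy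
  one_mem' := Msub_one_mem K
  add_mem' := fun hx hy => (Msub K).add_mem hx hy
  zero_mem' := (Msub K).zero_mem
  algebraMap_mem' := fun c => by
    have : algebraMap ℂ C(↥K × Tor d, ℂ) c = c • (1 : C(↥K × Tor d, ℂ)) :=
      Algebra.algebraMap_eq_smul_one c
    rw [this]
    exact (Msub K).smul_mem c (Msub_one_mem K)
  star_mem' := fun hx => Msub_star_mem K hx

lemma Asub_separates : (Asub K).SeparatesPoints := by
  intro p p' hne
  by_cases h1 : p.1 = p'.1
  · have h2 : p.2 ≠ p'.2 := by
      intro h2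
      exact hne (Prod.ext h1 h2)
    obtain ⟨i, hi⟩ := Function.ne_iff.mp h2
    refine ⟨⇑(tens K 1 (Pi.single i 1)), ⟨tens K 1 (Pi.single i 1),
      Submodule.subset_span ⟨1, Pi.single i 1, rfl⟩, rfl⟩, ?_⟩
    have hval : ∀ z : Tor d, chr (Pi.single i 1) z = fourier 1 (z i) := by
      intro z
      rw [chr_apply]
      rw [Finset.prod_eq_single i (fun j _ hj => by
        rw [Pi.single_eq_of_ne hj, fourier_zero]) (fun h => absurd (Finset.mem_univ i) h)]
      rw [Pi.single_eq_same]
    rw [tens_apply, tens_apply, hval, hval]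
    simp only [ContinuousMap.one_apply, one_mul]
    rw [fourier_one, fourier_one]
    intro hcon
    apply hi
    exact AddCircle.injective_toCircle one_ne_zero (Circle.coe_injective hcon)
  · have hco : (↑p.1 : Fin d → ℝ) ≠ ↑p'.1 := fun h => h1 (Subtype.ext h)
    obtain ⟨i, hi⟩ := Function.ne_iff.mp hco
    refine ⟨⇑(tens K ⟨fun k => (((k : Fin d → ℝ) i : ℝ) : ℂ),
        Complex.continuous_ofReal.comp ((continuous_apply i).comp continuous_subtype_val)⟩ 0),
      ⟨_, Submodule.subset_span ⟨_, 0, rfl⟩, rfl⟩, ?_⟩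
    rw [tens_apply, tens_apply, chr_zero]
    simp only [ContinuousMap.one_apply, mul_one, ContinuousMap.coe_mk]
    intro hcon
    exact hi (by exact_mod_cast hcon)

lemma P_span (hφ : Continuous φ) (hε : ∀ n, 0 < ε n) (hε0 : Tendsto ε atTop (𝓝 0))
    {g : C(↥K × Tor d, ℂ)} (hg : g ∈ Msub K) : P K φ ε g := by
  refine Submodule.span_induction ?_ ?_ ?_ ?_ hg
  · rintro g ⟨a, m, rfl⟩
    exact P_tens K ε hφ hε hε0 a m
  · exact P_zero K ε
  · intro u v _ _ hu hv
    exact P_add K ε hφ hu hv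
  · intro c u _ hu
    exact P_smul K ε hφ c hu

/-- the representative function for the torus -/
def rep (z : Tor d) : Fin d → ℝ := fun i => ((AddCircle.equivIco 1 0 (z i)) : ℝ)

lemma tpi_rep (z : Tor d) : tpi (rep z) = z := by
  funext i
  exact (AddCircle.equivIco 1 0).symm_apply_apply (z i)

theorem weak_limit_aux (τ : (Fin d → ℝ) → (Fin d → ℝ) → ℂ)
    (hτc : Continuous fun p : ↥K × (Fin d → ℝ) => τ p.1 p.2)
    (hτper : ∀ x y (k : Fin d → ℤ), τ x (y + fun i => (k i : ℝ)) = τ x y)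
    {φ : (Fin d → ℝ) → ℂ} (hφ : Continuous φ)
    (ε : ℕ → ℝ) (hε : ∀ n, 0 < ε n) (hε0 : Tendsto ε atTop (𝓝 0)) :
    Tendsto (fun n => ∫ x in K, τ x ((ε n)⁻¹ • x) * φ x) atTop
      (𝓝 (∫ x in K, (∫ y in box d, τ x y) * φ x)) := by
  classical
  -- the fiber-invariance of τ
  have hfib : ∀ (x y : Fin d → ℝ), τ x (rep (tpi y)) = τ x y := by
    intro x y
    obtain ⟨k, hk⟩ := tpi_eq_iff y (rep (tpi y)) (by rw [tpi_rep])
    rw [hk, hτper]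
  -- the lifted function
  have hQ : IsOpenQuotientMap (Prod.map (id : ↥K → ↥K) (tpi (d := d))) :=
    IsOpenQuotientMap.id.prodMap isOpenQuotientMap_tpi
  have hgbarc : Continuous (fun p : ↥K × Tor d => τ ↑p.1 (rep p.2)) := by
    rw [← hQ.continuous_comp_iff]
    have : ((fun p : ↥K × Tor d => τ ↑p.1 (rep p.2)) ∘ Prod.map id tpi)
        = fun p : ↥K × (Fin d → ℝ) => τ ↑p.1 p.2 := by
      funext p
      exact hfib ↑p.1 p.2
    rw [this]
    exact hτc
  set gbar : C(↥K × Tor d, ℂ) := ⟨fun p => τ ↑p.1 (rep p.2), hgbarc⟩ with hgbar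
  have hgg : ∀ x ∈ K, ∀ y, gg K gbar x y = τ x y := by
    intro x hx y
    rw [gg_of_mem K gbar hx y]
    exact hfib x y
  -- rewrite the goal in terms of Rn and Lv
  have hRn : (fun n => ∫ x in K, τ x ((ε n)⁻¹ • x) * φ x) = Rn K φ ε gbar := by
    funext n
    refine (setIntegral_congr_fun (hKmeas K) fun x hx => ?_).symm
    rw [hgg x hx]
  have hLv : (∫ x in K, (∫ y in box d, τ x y) * φ x) = Lv K φ gbar := by
    refine (setIntegral_congr_fun (hKmeas K) fun x hx => ?_).symm
    unfold mea
    congr 1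
    refine integral_congr_ae (Eventually.of_forall fun y => ?_)
    rw [hgg x hx]
  rw [hRn, hLv]
  show P K φ ε gbar
  unfold P
  -- Stone-Weierstrass
  have htop := ContinuousMap.starSubalgebra_topologicalClosure_eq_top_of_separatesPoints
    (Asub K) (Asub_separates K)
  have hclos : gbar ∈ closure ((Asub K) : Set C(↥K × Tor d, ℂ)) := by
    have : gbar ∈ (Asub K).topologicalClosure := by
      rw [htop]
      exact StarSubalgebra.mem_top
    exact this
  -- approximation argument
  set C := ∫ x in K, ‖φ x‖ with hC
  have hC0 : 0 ≤ C := setIntegral_nonneg (hKmeas K) fun x _ => norm_nonneg _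
  rw [Metric.tendsto_atTop]
  intro e he
  have hδ : 0 < e / (2 * C + 2) := by positivity
  obtain ⟨p, hpA, hpd⟩ := Metric.mem_closure_iff.mp hclos _ hδ
  have hp : P K φ ε p := P_span K ε hφ hε hε0 hpA
  obtain ⟨N, hN⟩ := Metric.tendsto_atTop.mp hp _ hδ
  refine ⟨N, fun n hn => ?_⟩
  have hd1 : ‖Rn K φ ε gbar n - Rn K φ ε p n‖ ≤ (e / (2 * C + 2)) * C := by
    rw [← Rn_sub K ε hφ]
    calc ‖Rn K φ ε (gbar - p) n‖ ≤ ‖gbar - p‖ * C := Rn_bound K ε hφ _ n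
    _ ≤ (e / (2 * C + 2)) * C := by
        apply mul_le_mul_of_nonneg_right _ hC0
        rw [← dist_eq_norm]
        exact le_of_lt hpd
  have hd3 : ‖Lv K φ p - Lv K φ gbar‖ ≤ (e / (2 * C + 2)) * C := by
    rw [norm_sub_rev, ← Lv_sub K hφ]
    calc ‖Lv K φ (gbar - p)‖ ≤ ‖gbar - p‖ * C := Lv_bound K hφ _
    _ ≤ (e / (2 * C + 2)) * C := by
        apply mul_le_mul_of_nonneg_right _ hC0
        rw [← dist_eq_norm]
        exact le_of_lt hpd
  have hd2 : ‖Rn K φ ε p n - Lv K φ p‖ < e / (2 * C + 2) := by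
    rw [← dist_eq_norm]
    exact hN n hn
  rw [dist_eq_norm]
  have hsplit : Rn K φ ε gbar n - Lv K φ gbar
      = (Rn K φ ε gbar n - Rn K φ ε p n) + (Rn K φ ε p n - Lv K φ p)
        + (Lv K φ p - Lv K φ gbar) := by ring
  rw [hsplit]
  calc ‖(Rn K φ ε gbar n - Rn K φ ε p n) + (Rn K φ ε p n - Lv K φ p)
        + (Lv K φ p - Lv K φ gbar)‖
      ≤ ‖Rn K φ ε gbar n - Rn K φ ε p n‖ + ‖Rn K φ ε p n - Lv K φ p‖
        + ‖Lv K φ p - Lv K φ gbar‖ := norm_add₃_le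
    _ < (e / (2 * C + 2)) * C + e / (2 * C + 2) + (e / (2 * C + 2)) * C := by
        have := add_le_add hd1 hd3
        nlinarith [hd2]
    _ ≤ e := by
        have h2 : (0:ℝ) < 2 * C + 2 := by linarith
        have ht : e / (2 * C + 2) * (2 * C + 2) = e := div_mul_cancel₀ e (ne_of_gt h2)
        nlinarith [hδ.le]

end
end OscAux

open OscAux in
/-- weak convergence of `σ(x, x/ε_n) e^{-2πi q·x/ε_n}` to the `q`-th Fourier
coefficient `σ̂(x, q)` of `σ` in its (periodic) second variable. -/
theorem oscillatory_weak_limit {d : ℕ} (Ω : Set (Fin d → ℝ))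
    (hΩ : IsOpen Ω) (hΩne : Ω.Nonempty)
    (σ : (Fin d → ℝ) → (Fin d → ℝ) → ℂ)
    (hσc : ContinuousOn (fun z : (Fin d → ℝ) × (Fin d → ℝ) => σ z.1 z.2) (Ω ×ˢ Set.univ))
    (hσper : ∀ x y : Fin d → ℝ, ∀ k : Fin d → ℤ, σ x (y + fun i => (k i : ℝ)) = σ x y)
    (ε : ℕ → ℝ) (hε : ∀ n, 0 < ε n) (hε0 : Filter.Tendsto ε Filter.atTop (𝓝 0))
    (q : Fin d → ℤ) :
    ∀ φ : (Fin d → ℝ) → ℂ, Continuous φ → HasCompactSupport φ → tsupport φ ⊆ Ω →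
      Filter.Tendsto
        (fun n => ∫ x in Ω,
          σ x ((ε n)⁻¹ • x) *
            Complex.exp (-(2 * Real.pi * Complex.I) * ∑ i, (q i : ℂ) * ((x i / ε n : ℝ) : ℂ)) *
            φ x)
        Filter.atTop
        (𝓝 (∫ x in Ω,
          (∫ y in Set.univ.pi fun _ : Fin d => Set.Icc (0 : ℝ) 1,
            σ x y * Complex.exp (-(2 * Real.pi * Complex.I) * ∑ i, (q i : ℂ) * ((y i : ℝ) : ℂ))) *
            φ x)) := by
  intro φ hφc hφcs hφsupp
  set K := tsupport φ with hK
  haveI : CompactSpace ↥K := isCompact_iff_compactSpace.mp hφcs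
  have hφK : ∀ x, x ∉ K → φ x = 0 := fun x hx => image_eq_zero_of_notMem_tsupport hx
  set τ : (Fin d → ℝ) → (Fin d → ℝ) → ℂ := fun x y =>
    σ x y * Complex.exp (-(2 * Real.pi * Complex.I) * ∑ i, (q i : ℂ) * ((y i : ℝ) : ℂ))
    with hτ
  -- periodicity of τ
  have hτper : ∀ x y (k : Fin d → ℤ), τ x (y + fun i => (k i : ℝ)) = τ x y := by
    intro x y k
    rw [hτ]
    dsimp only
    rw [hσper x y k]
    congr 1
    have hsum : (∑ i, (q i : ℂ) * ((((y + fun j => ((k j : ℤ) : ℝ)) i : ℝ)) : ℂ))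
        = (∑ i, (q i : ℂ) * ((y i : ℝ) : ℂ)) + ((∑ i, q i * k i : ℤ) : ℂ) := by
      push_cast
      rw [← Finset.sum_add_distrib]
      refine Finset.sum_congr rfl fun i _ => ?_
      have hyi : (y + fun j => ((k j : ℤ) : ℝ)) i = y i + (k i : ℝ) := rfl
      rw [hyi]
      push_cast
      ring
    rw [hsum, mul_add, Complex.exp_add]
    have h1 : Complex.exp (-(2 * Real.pi * Complex.I) * ((∑ i, q i * k i : ℤ) : ℂ)) = 1 := by
      have h2 := Complex.exp_int_mul_two_pi_mul_I (-(∑ i, q i * k i))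
      rw [← h2]
      congr 1
      push_cast
      ring
    rw [h1, mul_one]
  -- continuity of τ on ↥K × ℝ^d
  have hKΩ : K ⊆ Ω := hφsupp
  have hτc : Continuous fun p : ↥K × (Fin d → ℝ) => τ ↑p.1 p.2 := by
    rw [hτ]
    dsimp only
    apply Continuous.mul
    · exact hσc.comp_continuous
        ((continuous_subtype_val.comp continuous_fst).prodMk continuous_snd)
        (fun p => Set.mem_prod.mpr ⟨hKΩ p.1.2, Set.mem_univ _⟩)
    · exact Complex.continuous_exp.comp (continuous_const.mul
        (continuous_finset_sum _ fun i _ => continuous_const.mul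
          (Complex.continuous_ofReal.comp ((continuous_apply i).comp continuous_snd))))
  have haux := weak_limit_aux K τ hτc hτper hφc ε hε hε0
  -- rewrite LHS
  have hLHS : ∀ n, (∫ x in Ω,
        σ x ((ε n)⁻¹ • x) *
          Complex.exp (-(2 * Real.pi * Complex.I) * ∑ i, (q i : ℂ) * ((x i / ε n : ℝ) : ℂ)) *
          φ x)
      = ∫ x in K, τ x ((ε n)⁻¹ • x) * φ x := by
    intro n
    have hIeq : ∀ x : Fin d → ℝ,
        σ x ((ε n)⁻¹ • x) *
          Complex.exp (-(2 * Real.pi * Complex.I) * ∑ i, (q i : ℂ) * ((x i / ε n : ℝ) : ℂ)) *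
          φ x = τ x ((ε n)⁻¹ • x) * φ x := by
      intro x
      rw [hτ]
      dsimp only
      have harg : (∑ i, (q i : ℂ) * ((x i / ε n : ℝ) : ℂ))
          = ∑ i, (q i : ℂ) * ((((ε n)⁻¹ • x) i : ℝ) : ℂ) := by
        refine Finset.sum_congr rfl fun i _ => ?_
        have hsm : ((ε n)⁻¹ • x) i = x i / ε n := by
          rw [Pi.smul_apply, smul_eq_mul, ← div_eq_inv_mul]
        rw [hsm]
      rw [harg]
    simp only [hIeq]
    rw [MeasureTheory.setIntegral_eq_integral_of_forall_compl_eq_zero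
      (f := fun x => τ x ((ε n)⁻¹ • x) * φ x)
      (fun x hx => by rw [hφK x (fun hxK => hx (hKΩ hxK)), mul_zero]),
      ← MeasureTheory.setIntegral_eq_integral_of_forall_compl_eq_zero
      (f := fun x => τ x ((ε n)⁻¹ • x) * φ x)
      (fun x hx => by rw [hφK x hx, mul_zero])]
  -- rewrite RHS
  have hRHS : (∫ x in Ω,
        (∫ y in Set.univ.pi fun _ : Fin d => Set.Icc (0 : ℝ) 1,
          σ x y * Complex.exp (-(2 * Real.pi * Complex.I) *
            ∑ i, (q i : ℂ) * ((y i : ℝ) : ℂ))) * φ x)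
      = ∫ x in K, (∫ y in box d, τ x y) * φ x := by
    have h1 : (∫ x in Ω, (∫ y in box d, τ x y) * φ x)
        = ∫ x in K, (∫ y in box d, τ x y) * φ x := by
      rw [MeasureTheory.setIntegral_eq_integral_of_forall_compl_eq_zero
        (f := fun x => (∫ y in box d, τ x y) * φ x)
        (fun x hx => by rw [hφK x (fun hxK => hx (hKΩ hxK)), mul_zero]),
        ← MeasureTheory.setIntegral_eq_integral_of_forall_compl_eq_zero
        (f := fun x => (∫ y in box d, τ x y) * φ x)
        (fun x hx => by rw [hφK x hx, mul_zero])]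
    exact h1
  rw [funext hLHS, hRHS]
  exact haux
end

section
/- Let Ω ⊆ ℝ^d and V ⊆ ℝ^d be nonempty open sets with V bounded, and let a : Ω × V → ℝ^d be continuous. For ω ∈ L^2(Ω × [0,1)^d × V; ℂ), define for q ∈ ℤ^d the partial Fourier coefficient ω̂(x, q, λ) = ∫_{[0,1)^d} ω(x, y, λ) e^{−2πi q·y} dy (defined for almost every (x,λ) ∈ Ω × V), and for ε > 0 and q ∈ ℤ^d \ {0} set W_ε(q) = {(x,λ) ∈ Ω × V : |a(x,λ)·(q/|q|)| < 2ε}. Assume that for every q ∈ ℤ^d \ {0}, either ω̂(·, q, ·) = 0 almost everywhere on Ω × V, or the set {(x,λ) ∈ Ω × V : a(x,λ)·q = 0} has Lebesgue measure zero. Then lim_{ε→0⁺} Σ_{q ∈ ℤ^d \ {0}} ∫_{W_ε(q)} |ω̂(x, q, λ)|² dx dλ = 0. -/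
open MeasureTheory Filter Topology Complex
open scoped ENNReal

/-- The `q`-th partial Fourier coefficient (in the middle, periodic, variable)
of `ω : Ω × [0,1)^d × V → ℂ`. -/
noncomputable def partialFourierCoeff {d : ℕ}
    (ω : (Fin d → ℝ) → (Fin d → ℝ) → (Fin d → ℝ) → ℂ) (q : Fin d → ℤ)
    (x lam : Fin d → ℝ) : ℂ :=
  ∫ y in Set.univ.pi fun _ : Fin d => Set.Ico (0 : ℝ) 1,
    ω x y lam * Complex.exp (-(2 * Real.pi * Complex.I) * ∑ i, (q i : ℂ) * ((y i : ℝ) : ℂ))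


def unitBox (d : ℕ) : Set (Fin d → ℝ) := Set.univ.pi fun _ => Set.Ico (0:ℝ) 1

lemma integral_char_Ico (n : ℤ) :
    ∫ t in Set.Ico (0:ℝ) 1, Complex.exp (2 * Real.pi * Complex.I * n * t) =
      if n = 0 then 1 else 0 := by
  rw [MeasureTheory.integral_Ico_eq_integral_Ioo, ← MeasureTheory.integral_Ioc_eq_integral_Ioo, ← intervalIntegral.integral_of_le zero_le_one]
  by_cases h : n = 0
  · simp [h]
  · have hc : (2 * (Real.pi:ℂ) * Complex.I * (n:ℂ)) ≠ 0 := by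
      simp [Real.pi_ne_zero, Complex.I_ne_zero, h]
    rw [if_neg h]
    rw [integral_exp_mul_complex hc]
    have h1 : (2 * (Real.pi:ℂ) * Complex.I * (n:ℂ)) * ((1:ℝ):ℂ) = (n:ℂ) * (2 * Real.pi * Complex.I) := by
      push_cast; ring
    have h0 : (2 * (Real.pi:ℂ) * Complex.I * (n:ℂ)) * ((0:ℝ):ℂ) = 0 := by
      push_cast; ring
    rw [h1, h0, Complex.exp_int_mul_two_pi_mul_I, Complex.exp_zero]
    simp

lemma integral_box_prod {d : ℕ} (f : Fin d → ℝ → ℂ) :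
    ∫ y in unitBox d, ∏ i, f i (y i) = ∏ i, ∫ t in Set.Ico (0:ℝ) 1, f i t := by
  have hbox : MeasurableSet (unitBox d) :=
    MeasurableSet.univ_pi fun _ => measurableSet_Ico
  rw [← MeasureTheory.integral_indicator hbox]
  have key : (unitBox d).indicator (fun y => ∏ i, f i (y i)) =
      fun y => ∏ i, ((Set.Ico (0:ℝ) 1).indicator (f i)) (y i) := by
    funext y
    by_cases hy : y ∈ unitBox d
    · rw [Set.indicator_of_mem hy]
      refine Finset.prod_congr rfl fun i _ => ?_
      rw [Set.indicator_of_mem (hy i (Set.mem_univ i))]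
    · rw [Set.indicator_of_notMem hy]
      obtain ⟨i, -, hi⟩ : ∃ i ∈ Finset.univ, y i ∉ Set.Ico (0:ℝ) 1 := by
        simpa [unitBox, Set.mem_pi] using hy
      exact (Finset.prod_eq_zero (Finset.mem_univ i)
        (by rw [Set.indicator_of_notMem hi])).symm
  rw [key, MeasureTheory.integral_fintype_prod_volume_eq_prod]
  refine Finset.prod_congr rfl fun i _ => ?_
  rw [MeasureTheory.integral_indicator measurableSet_Ico]

lemma integral_box_char {d : ℕ} (n : Fin d → ℤ) :
    ∫ y in unitBox d, Complex.exp (2 * Real.pi * Complex.I * ∑ i, (n i : ℂ) * (y i : ℂ)) =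
      if n = 0 then 1 else 0 := by
  have h1 : ∀ y : Fin d → ℝ,
      Complex.exp (2 * Real.pi * Complex.I * ∑ i, (n i : ℂ) * (y i : ℂ)) =
        ∏ i, Complex.exp (2 * Real.pi * Complex.I * (n i : ℂ) * ((y i : ℝ) : ℂ)) := by
    intro y
    rw [← Complex.exp_sum, Finset.mul_sum]
    congr 1
    exact Finset.sum_congr rfl fun i _ => by ring
  simp_rw [h1]
  rw [integral_box_prod fun i t => Complex.exp (2 * Real.pi * Complex.I * (n i : ℂ) * (t : ℂ))]
  by_cases h : n = 0
  · simp [h, integral_char_Ico]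
  · obtain ⟨i, hi⟩ : ∃ i, n i ≠ 0 := by
      by_contra hc
      push_neg at hc
      exact h (funext hc)
    rw [if_neg h]
    refine Finset.prod_eq_zero (Finset.mem_univ i) ?_
    rw [integral_char_Ico, if_neg hi]



lemma volume_unitBox (d : ℕ) : volume (unitBox d) = 1 := by
  rw [unitBox, volume_pi_pi]
  simp [Real.volume_Ico]

noncomputable def charFun {d : ℕ} (q : Fin d → ℤ) : (Fin d → ℝ) → ℂ :=
  fun y => Complex.exp (2 * Real.pi * Complex.I * ∑ i, (q i : ℂ) * (y i : ℂ))

lemma charFun_norm {d : ℕ} (q : Fin d → ℤ) (y : Fin d → ℝ) : ‖charFun q y‖ = 1 := by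
  rw [_root_.charFun, Complex.norm_exp]
  have : (2 * Real.pi * Complex.I * ∑ i, (q i : ℂ) * (y i : ℂ)).re = 0 := by
    have : (∑ i, (q i : ℂ) * (y i : ℂ)) = ((∑ i, (q i : ℝ) * y i : ℝ) : ℂ) := by
      push_cast; ring_nf
    rw [this]
    simp [Complex.mul_re, Complex.mul_im]
  rw [this, Real.exp_zero]

lemma charFun_continuous {d : ℕ} (q : Fin d → ℤ) : Continuous (charFun q) := by
  unfold _root_.charFun
  fun_prop

lemma conj_charFun {d : ℕ} (q : Fin d → ℤ) (y : Fin d → ℝ) :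
    (starRingEnd ℂ) (charFun q y) =
      Complex.exp (-(2 * Real.pi * Complex.I) * ∑ i, (q i : ℂ) * (y i : ℂ)) := by
  rw [_root_.charFun, ← Complex.exp_conj]
  congr 1
  simp only [map_mul, map_sum, Complex.conj_I, map_ofNat, Complex.conj_ofReal]
  push_cast
  simp only [Complex.conj_ofReal, map_intCast]
  ring

lemma conj_charFun_mul_charFun {d : ℕ} (p q : Fin d → ℤ) (y : Fin d → ℝ) :
    (starRingEnd ℂ) (charFun p y) * charFun q y =
      Complex.exp (2 * Real.pi * Complex.I * ∑ i, ((q i - p i : ℤ) : ℂ) * (y i : ℂ)) := by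
  rw [conj_charFun, _root_.charFun, ← Complex.exp_add]
  congr 1
  push_cast
  rw [Finset.mul_sum, Finset.mul_sum, Finset.mul_sum, ← Finset.sum_add_distrib]
  refine Finset.sum_congr rfl fun i _ => by ring





lemma pow_toReal_two (x : ℝ≥0∞) : x ^ ((2:ℝ≥0∞).toReal) = x ^ (2:ℕ) := by
  rw [ENNReal.toReal_ofNat, ← ENNReal.rpow_natCast]
  norm_num

lemma bessel_pointwise {d : ℕ} (g : (Fin d → ℝ) → ℂ) (hg : Measurable g) :
    (∑' q : Fin d → ℤ,
        ((‖∫ y in unitBox d, g y *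
            Complex.exp (-(2 * Real.pi * Complex.I) * ∑ i, (q i : ℂ) * ((y i : ℝ) : ℂ))‖₊ : ℝ≥0∞))
          ^ (2:ℕ))
      ≤ ∫⁻ y in unitBox d, (‖g y‖₊ : ℝ≥0∞) ^ (2:ℕ) := by
  set μb := volume.restrict (unitBox d) with hμb
  haveI : IsFiniteMeasure μb := by
    constructor
    rw [hμb, Measure.restrict_apply_univ, volume_unitBox]
    exact ENNReal.one_lt_top
  by_cases hfin : (∫⁻ y, (‖g y‖₊ : ℝ≥0∞) ^ (2:ℕ) ∂μb) = ⊤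
  · exact hfin ▸ le_top
  have heLp : eLpNorm g 2 μb = (∫⁻ y, (‖g y‖₊ : ℝ≥0∞) ^ (2:ℕ) ∂μb) ^ (1/2 : ℝ) := by
    rw [eLpNorm_eq_lintegral_rpow_enorm_toReal two_ne_zero ENNReal.ofNat_ne_top]
    simp_rw [pow_toReal_two, enorm_eq_nnnorm]
    norm_num
  have hgL2 : MemLp g 2 μb := by
    refine ⟨hg.aestronglyMeasurable, ?_⟩
    rw [heLp]
    exact ENNReal.rpow_lt_top_of_nonneg (by norm_num) hfin
  have he : ∀ q : Fin d → ℤ, MemLp (charFun q) 2 μb := fun q =>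
    MemLp.of_bound (charFun_continuous q).aestronglyMeasurable 1
      (Filter.Eventually.of_forall fun y => le_of_eq (charFun_norm q y))
  set v : (Fin d → ℤ) → Lp ℂ 2 μb := fun q => (he q).toLp _ with hv_def
  set F : Lp ℂ 2 μb := hgL2.toLp g with hF_def
  have hv : Orthonormal ℂ v := by
    rw [orthonormal_iff_ite]
    intro p q
    have h1 : (inner ℂ (v p) (v q) : ℂ) = ∫ y, (starRingEnd ℂ) (v p y) * (v q y) ∂μb := by
      rw [MeasureTheory.L2.inner_def]
      simp only [RCLike.inner_apply']
    have h2 : (∫ y, (starRingEnd ℂ) (v p y) * (v q y) ∂μb) =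
        ∫ y, (starRingEnd ℂ) (charFun p y) * charFun q y ∂μb := by
      refine integral_congr_ae ?_
      filter_upwards [(he p).coeFn_toLp, (he q).coeFn_toLp] with y h3 h4
      rw [h3, h4]
    rw [h1, h2]
    simp_rw [conj_charFun_mul_charFun p q]
    rw [hμb]
    rw [show (∫ y in unitBox d, Complex.exp
        (2 * Real.pi * Complex.I * ∑ i, ((q i - p i : ℤ) : ℂ) * (y i : ℂ))) =
        if (fun i => q i - p i) = 0 then 1 else 0 from integral_box_char _]
    congr 1
    · rw [eq_iff_iff]
      constructor
      · intro h
        funext i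
        have := congrFun h i
        simp only [Pi.zero_apply] at this
        exact (sub_eq_zero.mp this).symm
      · intro h
        subst h
        funext i
        simp
  have hqf : ∀ q : Fin d → ℤ, (inner ℂ (v q) F : ℂ) =
      ∫ y in unitBox d, g y *
        Complex.exp (-(2 * Real.pi * Complex.I) * ∑ i, (q i : ℂ) * ((y i : ℝ) : ℂ)) := by
    intro q
    rw [MeasureTheory.L2.inner_def]
    have h2 : (∫ y, (inner ℂ (v q y) (F y) : ℂ) ∂μb) =
        ∫ y, (starRingEnd ℂ) (charFun q y) * g y ∂μb := by
      refine integral_congr_ae ?_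
      filter_upwards [(he q).coeFn_toLp, hgL2.coeFn_toLp] with y h3 h4
      rw [h3, h4, RCLike.inner_apply']
    rw [h2, hμb]
    refine integral_congr_ae (Filter.Eventually.of_forall fun y => ?_)
    dsimp only
    rw [conj_charFun, mul_comm]
  rw [ENNReal.tsum_eq_iSup_sum]
  refine iSup_le fun s => ?_
  have hreal : ∑ q ∈ s, ‖(inner ℂ (v q) F : ℂ)‖ ^ 2 ≤ ‖F‖ ^ 2 := hv.sum_inner_products_le (x := F)
  calc ∑ q ∈ s, ((‖∫ y in unitBox d, g y *
          Complex.exp (-(2 * Real.pi * Complex.I) * ∑ i, (q i : ℂ) * ((y i : ℝ) : ℂ))‖₊ : ℝ≥0∞)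
            ^ (2:ℕ))
      = ENNReal.ofReal (∑ q ∈ s, ‖(inner ℂ (v q) F : ℂ)‖ ^ 2) := by
        rw [ENNReal.ofReal_sum_of_nonneg (fun _ _ => sq_nonneg _)]
        refine Finset.sum_congr rfl fun q _ => ?_
        rw [hqf q, ENNReal.ofReal_pow (norm_nonneg _), ← enorm_eq_nnnorm, ofReal_norm]
    _ ≤ ENNReal.ofReal (‖F‖ ^ 2) := ENNReal.ofReal_le_ofReal hreal
    _ = ((‖F‖₊ : ℝ≥0∞)) ^ (2:ℕ) := by
        rw [ENNReal.ofReal_pow (norm_nonneg _), ← enorm_eq_nnnorm, ofReal_norm]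
    _ = (eLpNorm g 2 μb) ^ (2:ℕ) := by
        rw [Lp.nnnorm_def, eLpNorm_congr_ae hgL2.coeFn_toLp,
          ENNReal.coe_toNNReal (by rw [heLp]; exact
            (ENNReal.rpow_lt_top_of_nonneg (by norm_num) hfin).ne)]
    _ = ∫⁻ y, (‖g y‖₊ : ℝ≥0∞) ^ (2:ℕ) ∂μb := by
        rw [heLp, ← ENNReal.rpow_natCast _ 2, ← ENNReal.rpow_mul]
        norm_num





lemma measurable_partialFourierCoeff {d : ℕ}
    (ω : (Fin d → ℝ) → (Fin d → ℝ) → (Fin d → ℝ) → ℂ)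
    (hmeas : Measurable
      (fun z : (Fin d → ℝ) × (Fin d → ℝ) × (Fin d → ℝ) => ω z.1 z.2.1 z.2.2))
    (q : Fin d → ℤ) :
    Measurable fun z : (Fin d → ℝ) × (Fin d → ℝ) => partialFourierCoeff ω q z.1 z.2 := by
  have h1 : StronglyMeasurable fun p : ((Fin d → ℝ) × (Fin d → ℝ)) × (Fin d → ℝ) =>
      ω p.1.1 p.2 p.1.2 *
        Complex.exp (-(2 * Real.pi * Complex.I) * ∑ i, (q i : ℂ) * ((p.2 i : ℝ) : ℂ)) := by
    apply Measurable.stronglyMeasurable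
    refine Measurable.mul ?_ ?_
    · exact hmeas.comp ((measurable_fst.fst).prodMk
        ((measurable_snd).prodMk measurable_fst.snd))
    · have hc : Continuous fun y : Fin d → ℝ =>
          Complex.exp (-(2 * Real.pi * Complex.I) * ∑ i, (q i : ℂ) * ((y i : ℝ) : ℂ)) := by
        fun_prop
      exact (hc.measurable).comp measurable_snd
  exact (h1.integral_prod_right' (ν := volume.restrict (unitBox d))).measurable

lemma lintegral_G_eq {d : ℕ} (Ω V : Set (Fin d → ℝ))
    (ω : (Fin d → ℝ) → (Fin d → ℝ) → (Fin d → ℝ) → ℂ)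
    (hmeas : Measurable
      (fun z : (Fin d → ℝ) × (Fin d → ℝ) × (Fin d → ℝ) => ω z.1 z.2.1 z.2.2)) :
    (∫⁻ z : (Fin d → ℝ) × (Fin d → ℝ) in Ω ×ˢ V,
        ∫⁻ y in unitBox d, (‖ω z.1 y z.2‖₊ : ℝ≥0∞) ^ (2:ℕ))
      = ∫⁻ z in Ω ×ˢ (unitBox d ×ˢ V), (‖ω z.1 z.2.1 z.2.2‖₊ : ℝ≥0∞) ^ (2:ℕ) := by
  have m0 : Measurable fun w : (Fin d → ℝ) × (Fin d → ℝ) × (Fin d → ℝ) =>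
      (‖ω w.1 w.2.1 w.2.2‖₊ : ℝ≥0∞) ^ (2:ℕ) :=
    (hmeas.nnnorm.coe_nnreal_ennreal).pow_const 2
  rw [show ((volume : Measure ((Fin d → ℝ) × (Fin d → ℝ))).restrict (Ω ×ˢ V)) =
      (volume.restrict Ω).prod (volume.restrict V) by
        rw [Measure.prod_restrict, ← Measure.volume_eq_prod]]
  rw [show ((volume : Measure ((Fin d → ℝ) × (Fin d → ℝ) × (Fin d → ℝ))).restrict
        (Ω ×ˢ (unitBox d ×ˢ V))) =
      (volume.restrict Ω).prod ((volume.restrict (unitBox d)).prod (volume.restrict V)) by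
        rw [Measure.prod_restrict, Measure.prod_restrict, ← Measure.volume_eq_prod,
          ← Measure.volume_eq_prod]]
  have hrearr : Measurable fun p : ((Fin d → ℝ) × (Fin d → ℝ)) × (Fin d → ℝ) =>
      (p.1.1, (p.2, p.1.2)) :=
    (measurable_fst.fst).prodMk (measurable_snd.prodMk measurable_fst.snd)
  have m1' : Measurable fun p : ((Fin d → ℝ) × (Fin d → ℝ)) × (Fin d → ℝ) =>
      ω p.1.1 p.2 p.1.2 := by fun_prop
  have m1 : Measurable fun p : ((Fin d → ℝ) × (Fin d → ℝ)) × (Fin d → ℝ) =>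
      (‖ω p.1.1 p.2 p.1.2‖₊ : ℝ≥0∞) ^ (2:ℕ) := (m1'.nnnorm.coe_nnreal_ennreal).pow_const 2
  have hA : Measurable fun z : (Fin d → ℝ) × (Fin d → ℝ) =>
      ∫⁻ y, (‖ω z.1 y z.2‖₊ : ℝ≥0∞) ^ (2:ℕ) ∂(volume.restrict (unitBox d)) :=
    m1.lintegral_prod_right'
  rw [MeasureTheory.lintegral_prod _ hA.aemeasurable]
  rw [MeasureTheory.lintegral_prod _ m0.aemeasurable]
  refine lintegral_congr fun x => ?_
  have hB : Measurable fun w : (Fin d → ℝ) × (Fin d → ℝ) =>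
      (‖ω x w.1 w.2‖₊ : ℝ≥0∞) ^ (2:ℕ) := by
    have : Measurable fun w : (Fin d → ℝ) × (Fin d → ℝ) => ω x w.1 w.2 := by fun_prop
    exact (this.nnnorm.coe_nnreal_ennreal).pow_const 2
  rw [MeasureTheory.lintegral_prod _ hB.aemeasurable]
  have hC : Measurable fun w : (Fin d → ℝ) × (Fin d → ℝ) =>
      (‖ω x w.2 w.1‖₊ : ℝ≥0∞) ^ (2:ℕ) := by
    have : Measurable fun w : (Fin d → ℝ) × (Fin d → ℝ) => ω x w.2 w.1 := by fun_prop
    exact (this.nnnorm.coe_nnreal_ennreal).pow_const 2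
  exact lintegral_lintegral_swap hC.aemeasurable





/-- if, for every `q ≠ 0`, either `ω̂(·,q,·)` vanishes a.e. or the zero set of
`a·q` in `Ω × V` is Lebesgue-null, then the mass of the coefficients over the
near-characteristic sets `W_ε(q)` vanishes as `ε → 0⁺`. -/
theorem coeff_mass_near_characteristic_vanishes {d : ℕ}
    (Ω V : Set (Fin d → ℝ)) (hΩ : IsOpen Ω) (hΩne : Ω.Nonempty)
    (hV : IsOpen V) (hVne : V.Nonempty) (hVb : Bornology.IsBounded V)
    (a : (Fin d → ℝ) → (Fin d → ℝ) → Fin d → ℝ)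
    (ha : ContinuousOn (fun z : (Fin d → ℝ) × (Fin d → ℝ) => a z.1 z.2) (Ω ×ˢ V))
    (ω : (Fin d → ℝ) → (Fin d → ℝ) → (Fin d → ℝ) → ℂ)
    (hmeas : Measurable
      (fun z : (Fin d → ℝ) × (Fin d → ℝ) × (Fin d → ℝ) => ω z.1 z.2.1 z.2.2))
    (hL2 : (∫⁻ z in Ω ×ˢ (Set.univ.pi fun _ : Fin d => Set.Ico (0 : ℝ) 1) ×ˢ V,
        ((‖ω z.1 z.2.1 z.2.2‖₊ : ℝ≥0∞) ^ (2 : ℕ))) < ⊤)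
    (hzero : ∀ q : Fin d → ℤ, q ≠ 0 →
      ((fun z : (Fin d → ℝ) × (Fin d → ℝ) => partialFourierCoeff ω q z.1 z.2)
          =ᵐ[volume.restrict (Ω ×ˢ V)] 0) ∨
        volume {z : (Fin d → ℝ) × (Fin d → ℝ) |
          z ∈ Ω ×ˢ V ∧ ∑ i, a z.1 z.2 i * (q i : ℝ) = 0} = 0) :
    Filter.Tendsto
      (fun ε : ℝ => ∑' q : {q : Fin d → ℤ // q ≠ 0},
        ∫⁻ z in {z : (Fin d → ℝ) × (Fin d → ℝ) | z ∈ Ω ×ˢ V ∧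
            |∑ i, a z.1 z.2 i * ((q.1 i : ℝ) / Real.sqrt (∑ j, ((q.1 j : ℝ)) ^ 2))| < 2 * ε},
          ((‖partialFourierCoeff ω q.1 z.1 z.2‖₊ : ℝ≥0∞) ^ (2 : ℕ)))
      (𝓝[>] (0 : ℝ)) (𝓝 (0 : ℝ≥0∞)) := by
  classical
  -- abbreviations
  set f : (Fin d → ℤ) → (Fin d → ℝ) × (Fin d → ℝ) → ℝ≥0∞ :=
    fun q z => (‖partialFourierCoeff ω q z.1 z.2‖₊ : ℝ≥0∞) ^ (2:ℕ) with hf_def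
  set W : (Fin d → ℤ) → ℝ → Set ((Fin d → ℝ) × (Fin d → ℝ)) :=
    fun q ε => {z : (Fin d → ℝ) × (Fin d → ℝ) | z ∈ Ω ×ˢ V ∧
      |∑ i, a z.1 z.2 i * ((q i : ℝ) / Real.sqrt (∑ j, ((q j : ℝ)) ^ 2))| < 2 * ε} with hW_def
  show Tendsto (fun ε : ℝ => ∑' q : {q : Fin d → ℤ // q ≠ 0}, ∫⁻ z in W q.1 ε, f q.1 z)
    (𝓝[>] (0:ℝ)) (𝓝 0)
  -- measurability of the coefficient functions
  have hfm : ∀ q : Fin d → ℤ, Measurable (f q) := fun q =>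
    ((measurable_partialFourierCoeff ω hmeas q).nnnorm.coe_nnreal_ennreal).pow_const 2
  -- openness of the sets W q ε
  have hWopen : ∀ (q : Fin d → ℤ) (ε : ℝ), IsOpen (W q ε) := by
    intro q ε
    have hcont : ContinuousOn (fun z : (Fin d → ℝ) × (Fin d → ℝ) =>
        |∑ i, a z.1 z.2 i * ((q i : ℝ) / Real.sqrt (∑ j, ((q j : ℝ)) ^ 2))|) (Ω ×ˢ V) := by
      refine ContinuousOn.abs ?_
      refine continuousOn_finset_sum _ fun i _ => ContinuousOn.mul ?_ continuousOn_const
      exact (continuous_apply i).comp_continuousOn ha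
    have heq : W q ε = (Ω ×ˢ V) ∩ (fun z : (Fin d → ℝ) × (Fin d → ℝ) =>
        |∑ i, a z.1 z.2 i * ((q i : ℝ) / Real.sqrt (∑ j, ((q j : ℝ)) ^ 2))|) ⁻¹'
          Set.Iio (2 * ε) := rfl
    rw [heq]
    exact hcont.isOpen_inter_preimage (hΩ.prod hV) isOpen_Iio
  have hWsub : ∀ (q : Fin d → ℤ) (ε : ℝ), W q ε ⊆ Ω ×ˢ V := fun q ε z hz => hz.1
  -- total mass is finite
  have hsum : (∑' q : {q : Fin d → ℤ // q ≠ 0}, ∫⁻ z in Ω ×ˢ V, f q.1 z) < ⊤ := by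
    have h1 : (∑' q : {q : Fin d → ℤ // q ≠ 0}, ∫⁻ z in Ω ×ˢ V, f q.1 z)
        ≤ ∑' q : Fin d → ℤ, ∫⁻ z in Ω ×ˢ V, f q z :=
      ENNReal.tsum_comp_le_tsum_of_injective Subtype.val_injective _
    have h2 : (∑' q : Fin d → ℤ, ∫⁻ z in Ω ×ˢ V, f q z)
        = ∫⁻ z in Ω ×ˢ V, ∑' q : Fin d → ℤ, f q z :=
      (lintegral_tsum fun q => (hfm q).aemeasurable).symm
    have h3 : (∫⁻ z : (Fin d → ℝ) × (Fin d → ℝ) in Ω ×ˢ V, ∑' q : Fin d → ℤ, f q z)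
        ≤ ∫⁻ z : (Fin d → ℝ) × (Fin d → ℝ) in Ω ×ˢ V,
            ∫⁻ y in unitBox d, (‖ω z.1 y z.2‖₊ : ℝ≥0∞) ^ (2:ℕ) := by
      refine lintegral_mono fun z => ?_
      have hg : Measurable fun y => ω z.1 y z.2 := by fun_prop
      exact bessel_pointwise (fun y => ω z.1 y z.2) hg
    rw [lintegral_G_eq Ω V ω hmeas] at h3
    exact lt_of_le_of_lt (h1.trans (h2 ▸ h3)) hL2
  have hcfin : ∀ q : {q : Fin d → ℤ // q ≠ 0}, (∫⁻ z in Ω ×ˢ V, f q.1 z) ≠ ⊤ :=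
    fun q => ne_top_of_le_ne_top hsum.ne (ENNReal.le_tsum q)
  -- per-q convergence along the sequence 1/(n+1)
  have hconv : ∀ q : {q : Fin d → ℤ // q ≠ 0},
      Tendsto (fun n : ℕ => ∫⁻ z in W q.1 (1/(n+1 : ℝ)), f q.1 z) atTop (𝓝 0) := by
    rintro ⟨q, hq⟩
    rcases hzero q hq with hae | hnull
    · have hz : ∀ ε : ℝ, ∫⁻ z in W q ε, f q z = 0 := by
        intro ε
        have h1 : (volume.restrict (Ω ×ˢ V)).restrict (W q ε) = volume.restrict (W q ε) := by
          rw [Measure.restrict_restrict (hWopen q ε).measurableSet,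
            Set.inter_eq_self_of_subset_left (hWsub q ε)]
        have h0 : f q =ᵐ[(volume.restrict (Ω ×ˢ V)).restrict (W q ε)] 0 := by
          refine (hae.restrict (s := W q ε)).mono fun z hz => ?_
          simp only [hf_def]
          rw [show partialFourierCoeff ω q z.1 z.2 = 0 from hz]
          simp
        rw [← h1]
        calc ∫⁻ z, f q z ∂((volume.restrict (Ω ×ˢ V)).restrict (W q ε))
            = ∫⁻ z, 0 ∂((volume.restrict (Ω ×ˢ V)).restrict (W q ε)) := lintegral_congr_ae h0
          _ = 0 := lintegral_zero
      simp only [hz]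
      exact tendsto_const_nhds
    · set ν : Measure ((Fin d → ℝ) × (Fin d → ℝ)) :=
        (volume.restrict (Ω ×ˢ V)).withDensity (f q) with hν_def
      have hν : ∀ ε : ℝ, ∫⁻ z in W q ε, f q z = ν (W q ε) := by
        intro ε
        rw [hν_def, withDensity_apply _ (hWopen q ε).measurableSet,
          Measure.restrict_restrict (hWopen q ε).measurableSet,
          Set.inter_eq_self_of_subset_left (hWsub q ε)]
      have hνtot : ∀ ε : ℝ, ν (W q ε) ≠ ⊤ := by
        intro ε
        rw [← hν ε]
        exact ne_top_of_le_ne_top (hcfin ⟨q, hq⟩) (lintegral_mono_set (hWsub q ε))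
      have hanti : Antitone fun n : ℕ => W q (1/(n+1 : ℝ)) := by
        intro m n hmn z hz
        refine ⟨hz.1, lt_of_lt_of_le hz.2 ?_⟩
        have : (1 : ℝ)/(n+1) ≤ 1/(m+1) := by
          apply one_div_le_one_div_of_le
          · positivity
          · have := (Nat.cast_le (α := ℝ)).mpr hmn
            linarith
        linarith
      have htend := tendsto_measure_iInter_atTop (μ := ν)
        (s := fun n : ℕ => W q (1/(n+1 : ℝ)))
        (fun n => ((hWopen q (1/(n+1 : ℝ))).measurableSet).nullMeasurableSet) hanti
        ⟨0, hνtot _⟩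
      have hinter : ν (⋂ n : ℕ, W q (1/(n+1 : ℝ))) = 0 := by
        have hsqrt : (0:ℝ) < Real.sqrt (∑ j, ((q j : ℝ)) ^ 2) := by
          apply Real.sqrt_pos.mpr
          obtain ⟨i, hi⟩ : ∃ i, q i ≠ 0 := by
            by_contra hc
            push_neg at hc
            exact hq (funext hc)
          refine Finset.sum_pos' (fun j _ => sq_nonneg _) ⟨i, Finset.mem_univ i, ?_⟩
          have : ((q i : ℝ)) ≠ 0 := Int.cast_ne_zero.mpr hi
          positivity
        have hsub2 : (⋂ n : ℕ, W q (1/(n+1 : ℝ))) ⊆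
            {z : (Fin d → ℝ) × (Fin d → ℝ) |
              z ∈ Ω ×ˢ V ∧ ∑ i, a z.1 z.2 i * (q i : ℝ) = 0} := by
          intro z hz
          simp only [Set.mem_iInter] at hz
          have hmem := (hz 0).1
          have habs : |∑ i, a z.1 z.2 i * ((q i : ℝ) / Real.sqrt (∑ j, ((q j : ℝ)) ^ 2))| ≤ 0 := by
            by_contra hpos
            push_neg at hpos
            obtain ⟨n, hn⟩ := exists_nat_one_div_lt (ε :=
              |∑ i, a z.1 z.2 i * ((q i : ℝ) / Real.sqrt (∑ j, ((q j : ℝ)) ^ 2))| / 2)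
              (by positivity)
            have h2 := (hz n).2
            have : (2 : ℝ) * (1/(n+1)) <
                |∑ i, a z.1 z.2 i * ((q i : ℝ) / Real.sqrt (∑ j, ((q j : ℝ)) ^ 2))| := by
              linarith
            linarith
          have hS0 : ∑ i, a z.1 z.2 i * ((q i : ℝ) / Real.sqrt (∑ j, ((q j : ℝ)) ^ 2)) = 0 :=
            abs_eq_zero.mp (le_antisymm habs (abs_nonneg _))
          have hS1 : (∑ i, a z.1 z.2 i * (q i : ℝ)) / Real.sqrt (∑ j, ((q j : ℝ)) ^ 2) = 0 := by
            rw [← hS0, Finset.sum_div]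
            exact Finset.sum_congr rfl fun i _ => by ring
          refine ⟨hmem, ?_⟩
          rcases div_eq_zero_iff.mp hS1 with h | h
          · exact h
          · exact absurd h hsqrt.ne'
        refine le_antisymm ?_ zero_le
        refine le_trans (measure_mono hsub2) ?_
        have hbase : (volume.restrict (Ω ×ˢ V))
            {z : (Fin d → ℝ) × (Fin d → ℝ) |
              z ∈ Ω ×ˢ V ∧ ∑ i, a z.1 z.2 i * (q i : ℝ) = 0} = 0 := by
          refine le_antisymm ?_ zero_le
          calc (volume.restrict (Ω ×ˢ V)) _ ≤ volume _ := Measure.restrict_le_self _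
            _ = 0 := hnull
        rw [hν_def]
        exact le_of_eq ((withDensity_absolutelyContinuous _ _) hbase)
      rw [hinter] at htend
      simp only [hν]
      exact htend
  -- dominated convergence over q
  have hdom : Tendsto (fun n : ℕ => ∑' q : {q : Fin d → ℤ // q ≠ 0},
      ∫⁻ z in W q.1 (1/(n+1 : ℝ)), f q.1 z) atTop (𝓝 0) := by
    have key := tendsto_lintegral_of_dominated_convergence
      (μ := Measure.count (α := {q : Fin d → ℤ // q ≠ 0}))
      (F := fun (n : ℕ) (q : {q : Fin d → ℤ // q ≠ 0}) => ∫⁻ z in W q.1 (1/(n+1 : ℝ)), f q.1 z)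
      (f := fun _ => 0)
      (bound := fun q => ∫⁻ z in Ω ×ˢ V, f q.1 z)
      (fun n => measurable_of_countable _)
      (fun n => Filter.Eventually.of_forall fun q => lintegral_mono_set (hWsub q.1 _))
      (by rw [lintegral_count]; exact hsum.ne)
      (Filter.Eventually.of_forall hconv)
    simp only [lintegral_count, lintegral_zero] at key
    exact key
  -- wrap up: monotonicity in ε
  rw [ENNReal.tendsto_nhds_zero]
  intro δ hδ
  obtain ⟨n, hn⟩ := (ENNReal.tendsto_nhds_zero.mp hdom δ hδ).exists
  have hpos : (0:ℝ) < 1/(n+1) := by positivity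
  filter_upwards [Ioc_mem_nhdsGT_of_mem (Set.mem_Ico.mpr ⟨le_refl (0:ℝ), hpos⟩)] with ε hε
  refine le_trans (ENNReal.tsum_le_tsum fun q => lintegral_mono_set ?_) hn
  intro z hz
  exact ⟨hz.1, lt_of_lt_of_le hz.2 (by have := hε.2; linarith)⟩
end
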